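/- arXiv:2202.00074 — 6 statements merged into one kernel-verified Lean document; each statement's English description precedes it below -/
import Mathlib

section
/- For any p ≥ 1, λ > 0 and x > 0, the tail integral of the exponential power density satisfies (e^{-λx^p}/(λ p x^{p-1}))·(1 + (1-p)/(λ p x^p)) ≤ ∫_x^∞ e^{-λt^p} dt ≤ e^{-λx^p}/(λ p x^{p-1}). -/
open Real MeasureTheory Set Filter Topology

set_option maxHeartbeats 1000000 in
theorem exp_power_tail_bounds (p lam x : ℝ) (hp : 1 ≤ p) (hlam : 0 < lam) (hx : 0 < x) :
    (Real.exp (-lam * x ^ p) / (lam * p * x ^ (p - 1))) * (1 + (1 - p) / (lam * p * x ^ p))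
      ≤ ∫ t in Set.Ioi x, Real.exp (-lam * t ^ p) ∧
    ∫ t in Set.Ioi x, Real.exp (-lam * t ^ p)
      ≤ Real.exp (-lam * x ^ p) / (lam * p * x ^ (p - 1)) := by
  have hp0 : (0:ℝ) < p := lt_of_lt_of_le one_pos hp
  have hlp : 0 < lam * p := mul_pos hlam hp0
  -- exp(-lam * t^p) → 0
  have hExpT : Tendsto (fun t : ℝ => exp (-lam * t ^ p)) atTop (𝓝 0) := by
    have h1 : Tendsto (fun t : ℝ => lam * t ^ p) atTop atTop :=
      (tendsto_rpow_atTop hp0).const_mul_atTop hlam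
    have := tendsto_exp_neg_atTop_nhds_zero.comp h1
    simpa [Function.comp_def, neg_mul] using this
  -- integrabilities
  have hInt1 : IntegrableOn (fun t : ℝ => t ^ (p-1) * exp (-lam * t ^ p)) (Ioi x) :=
    (integrableOn_rpow_mul_exp_neg_mul_rpow (by linarith) hp0 hlam).mono_set
      (Ioi_subset_Ioi hx.le)
  have hInt0 : IntegrableOn (fun t : ℝ => exp (-lam * t ^ p)) (Ioi x) := by
    have := (integrableOn_rpow_mul_exp_neg_mul_rpow (by norm_num : (-1:ℝ) < 0) hp0 hlam).mono_set
      (Ioi_subset_Ioi hx.le)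
    simpa using this
  -- derivative of exp(-lam * t^p)
  have hDexp : ∀ t : ℝ, 0 < t → HasDerivAt (fun t : ℝ => exp (-lam * t ^ p))
      (-(lam * p) * (t ^ (p-1) * exp (-lam * t ^ p))) t := by
    intro t ht
    have h1 : HasDerivAt (fun t : ℝ => t ^ p) (p * t ^ (p-1)) t :=
      Real.hasDerivAt_rpow_const (Or.inl ht.ne')
    have h2 := (h1.const_mul (-lam)).exp
    convert h2 using 1
    ring
  -- FTC for t^(p-1) * exp
  have hFTC1 : (∫ t in Ioi x, t ^ (p-1) * exp (-lam * t ^ p))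
      = exp (-lam * x ^ p) / (lam * p) := by
    have key : ∀ t ∈ Ici x, HasDerivAt (fun t : ℝ => -(exp (-lam * t ^ p) / (lam * p)))
        (t ^ (p-1) * exp (-lam * t ^ p)) t := by
      intro t ht
      have h := ((hDexp t (lt_of_lt_of_le hx ht)).div_const (lam * p)).neg
      refine h.congr_deriv ?_
      field_simp
    have hT : Tendsto (fun t : ℝ => -(exp (-lam * t ^ p) / (lam * p))) atTop (𝓝 0) := by
      simpa using (hExpT.div_const (lam*p)).neg
    rw [integral_Ioi_of_hasDerivAt_of_tendsto' key hInt1 hT]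
    ring
  -- key rpow facts at x
  have hxp : (0:ℝ) < x ^ p := rpow_pos_of_pos hx p
  have hxp1 : (0:ℝ) < x ^ (p-1) := rpow_pos_of_pos hx _
  have hx1p : x ^ (1-p) * x ^ (p-1) = 1 := by
    rw [← rpow_add hx]; norm_num
  constructor
  · -- LOWER BOUND
    set K : ℝ := (1-p)*(1-2*p)/(lam*p)^2 with hK
    have hK0 : 0 ≤ K := by
      apply div_nonneg _ (sq_nonneg _)
      nlinarith
    set G : ℝ → ℝ := fun t => exp (-lam * t ^ p) *
      (t ^ (1-p)/(lam*p) + (1-p) * t ^ (1-2*p) / (lam*p)^2) with hG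
    -- derivative of G
    have hDG : ∀ t : ℝ, 0 < t → HasDerivAt (fun t => -(G t))
        (exp (-lam * t ^ p) * (1 - K * t ^ (-(2*p)))) t := by
      intro t ht
      have h1 : HasDerivAt (fun t : ℝ => t ^ (1-p)) ((1-p) * t ^ (1-p-1)) t :=
        Real.hasDerivAt_rpow_const (Or.inl ht.ne')
      have h2 : HasDerivAt (fun t : ℝ => t ^ (1-2*p)) ((1-2*p) * t ^ (1-2*p-1)) t :=
        Real.hasDerivAt_rpow_const (Or.inl ht.ne')
      have hu : HasDerivAt (fun t : ℝ => t ^ (1-p)/(lam*p) + (1-p) * t ^ (1-2*p) / (lam*p)^2)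
          ((1-p) * t ^ (1-p-1)/(lam*p) + (1-p) * ((1-2*p) * t ^ (1-2*p-1)) / (lam*p)^2) t :=
        (h1.div_const _).add (((h2.const_mul (1-p)).div_const _))
      have hmul := ((hDexp t ht).mul hu).neg
      refine hmul.congr_deriv ?_
      -- rewrite all rpow's in terms of t^p and t
      have ht0 : t ≠ 0 := ht.ne'
      have htp : (0:ℝ) < t ^ p := rpow_pos_of_pos ht p
      have e1 : t ^ (p-1) = t ^ p / t := by rw [rpow_sub ht, rpow_one]
      have e2 : t ^ (1-p) = t / t ^ p := by rw [rpow_sub ht, rpow_one]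
      have e3 : t ^ (1-2*p) = t / (t ^ p * t ^ p) := by
        rw [show (1-2*p) = 1 - (p + p) by ring, rpow_sub ht, rpow_one, rpow_add ht]
      have e4 : t ^ (1-p-1) = 1 / t ^ p := by
        rw [show (1-p-1:ℝ) = 0 - p by ring, rpow_sub ht, rpow_zero]
      have e5 : t ^ (1-2*p-1) = 1 / (t ^ p * t ^ p) := by
        rw [show (1-2*p-1:ℝ) = 0 - (p + p) by ring, rpow_sub ht, rpow_zero, rpow_add ht]
      have e6 : t ^ (-(2*p)) = 1 / (t ^ p * t ^ p) := by
        rw [show (-(2*p):ℝ) = 0 - (p + p) by ring, rpow_sub ht, rpow_zero, rpow_add ht]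
      rw [hK, e1, e2, e3, e4, e5, e6]
      field_simp
      ring
    -- tendsto of -G to 0
    have hGT : Tendsto (fun t : ℝ => -(G t)) atTop (𝓝 0) := by
      have hC1 : Tendsto (fun t : ℝ => -((x ^ (1-p)/(lam*p)) * exp (-lam * t ^ p)))
          atTop (𝓝 0) := by
        simpa using (hExpT.const_mul (x ^ (1-p)/(lam*p))).neg
      have hC2 : Tendsto (fun t : ℝ => -(((1-p) * x ^ (1-2*p) / (lam*p)^2) * exp (-lam * t ^ p)))
          atTop (𝓝 0) := by
        simpa using (hExpT.const_mul ((1-p) * x ^ (1-2*p) / (lam*p)^2)).neg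
      refine tendsto_of_tendsto_of_tendsto_of_le_of_le' hC1 hC2 ?_ ?_
      · filter_upwards [eventually_ge_atTop x] with t htx
        have ht : 0 < t := lt_of_lt_of_le hx htx
        have hb1 : t ^ (1-p) ≤ x ^ (1-p) := rpow_le_rpow_of_nonpos hx htx (by linarith)
        have hb1' : (0:ℝ) ≤ t ^ (1-p) := (rpow_pos_of_pos ht _).le
        have hb2 : t ^ (1-2*p) ≤ x ^ (1-2*p) := rpow_le_rpow_of_nonpos hx htx (by linarith)
        have hb2' : (0:ℝ) ≤ t ^ (1-2*p) := (rpow_pos_of_pos ht _).le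
        have he : (0:ℝ) < exp (-lam * t ^ p) := exp_pos _
        simp only [hG, neg_le_neg_iff]
        have hu2 : (1-p) * t ^ (1-2*p) / (lam*p)^2 ≤ 0 :=
          div_nonpos_of_nonpos_of_nonneg
            (mul_nonpos_of_nonpos_of_nonneg (by linarith) hb2') (sq_nonneg _)
        have hu1 : t ^ (1-p)/(lam*p) ≤ x ^ (1-p)/(lam*p) := by gcongr
        have hu : t ^ (1-p)/(lam*p) + (1-p) * t ^ (1-2*p) / (lam*p)^2
            ≤ x ^ (1-p)/(lam*p) := by linarith
        nlinarith [mul_le_mul_of_nonneg_left hu he.le]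
      · filter_upwards [eventually_ge_atTop x] with t htx
        have ht : 0 < t := lt_of_lt_of_le hx htx
        have hb1' : (0:ℝ) ≤ t ^ (1-p) := (rpow_pos_of_pos ht _).le
        have hb2 : t ^ (1-2*p) ≤ x ^ (1-2*p) := rpow_le_rpow_of_nonpos hx htx (by linarith)
        have hb2' : (0:ℝ) ≤ t ^ (1-2*p) := (rpow_pos_of_pos ht _).le
        have he : (0:ℝ) < exp (-lam * t ^ p) := exp_pos _
        simp only [hG, neg_le_neg_iff]
        have hl2 : (1-p) * x ^ (1-2*p) / (lam*p)^2 ≤ (1-p) * t ^ (1-2*p) / (lam*p)^2 := by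
          exact (div_le_div_iff_of_pos_right (pow_pos hlp 2)).mpr
            (mul_le_mul_of_nonpos_left hb2 (by linarith))
        have hl1 : (0:ℝ) ≤ t ^ (1-p)/(lam*p) := div_nonneg hb1' hlp.le
        have hu : (1-p) * x ^ (1-2*p) / (lam*p)^2
            ≤ t ^ (1-p)/(lam*p) + (1-p) * t ^ (1-2*p) / (lam*p)^2 := by linarith
        nlinarith [mul_le_mul_of_nonneg_left hu he.le]
    -- integrability of the derivative
    have hIntD : IntegrableOn (fun t : ℝ => exp (-lam * t ^ p) * (1 - K * t ^ (-(2*p))))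
        (Ioi x) := by
      refine Integrable.mono' (hInt0.const_mul (1 + K * x ^ (-(2*p)))) ?_ ?_
      · have hc : ContinuousOn (fun t : ℝ => exp (-lam * t ^ p) * (1 - K * t ^ (-(2*p))))
            (Ioi x) := by
          apply ContinuousOn.mul
          · exact Real.continuous_exp.comp_continuousOn
              (continuousOn_const.mul (continuousOn_id.rpow_const fun t ht => Or.inr hp0.le))
          · exact continuousOn_const.sub (continuousOn_const.mul
              (continuousOn_id.rpow_const fun t ht => Or.inl (ne_of_gt (lt_trans hx ht))))
        exact hc.aestronglyMeasurable measurableSet_Ioi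
      · filter_upwards [ae_restrict_mem measurableSet_Ioi] with t htx
        have ht : 0 < t := lt_trans hx htx
        have hb : t ^ (-(2*p)) ≤ x ^ (-(2*p)) :=
          rpow_le_rpow_of_nonpos hx htx.le (by linarith)
        have hb' : (0:ℝ) ≤ t ^ (-(2*p)) := (rpow_pos_of_pos ht _).le
        have he : (0:ℝ) < exp (-lam * t ^ p) := exp_pos _
        rw [Real.norm_eq_abs, abs_mul, abs_of_pos he]
        have : |1 - K * t ^ (-(2*p))| ≤ 1 + K * x ^ (-(2*p)) := by
          rw [abs_le]
          constructor <;> nlinarith [mul_le_mul_of_nonneg_left hb hK0]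
        nlinarith
    have hFTC2 : (∫ t in Ioi x, exp (-lam * t ^ p) * (1 - K * t ^ (-(2*p)))) = G x := by
      have := integral_Ioi_of_hasDerivAt_of_tendsto'
        (fun t ht => hDG t (lt_of_lt_of_le hx ht)) hIntD hGT
      rw [this]; ring
    have hmono : (∫ t in Ioi x, exp (-lam * t ^ p) * (1 - K * t ^ (-(2*p))))
        ≤ ∫ t in Ioi x, exp (-lam * t ^ p) := by
      refine setIntegral_mono_on hIntD hInt0 measurableSet_Ioi ?_
      intro t htx
      have ht : 0 < t := lt_trans hx htx
      have hb' : (0:ℝ) ≤ t ^ (-(2*p)) := (rpow_pos_of_pos ht _).le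
      have he : (0:ℝ) < exp (-lam * t ^ p) := exp_pos _
      nlinarith [mul_nonneg (mul_nonneg hK0 hb') he.le]
    -- now the algebra: LHS target = G x
    have halg : (Real.exp (-lam * x ^ p) / (lam * p * x ^ (p - 1)))
        * (1 + (1 - p) / (lam * p * x ^ p)) = G x := by
      rw [hG]
      beta_reduce
      have e2 : x ^ (1-p) = x / x ^ p := by rw [rpow_sub hx, rpow_one]
      have e3 : x ^ (1-2*p) = x / (x ^ p * x ^ p) := by
        rw [show (1-2*p) = 1 - (p + p) by ring, rpow_sub hx, rpow_one, rpow_add hx]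
      have e1 : x ^ (p-1) = x ^ p / x := by rw [rpow_sub hx, rpow_one]
      rw [e1, e2, e3]
      have hxne : x ≠ 0 := hx.ne'
      have hxpne : x ^ p ≠ 0 := hxp.ne'
      have hlpne : lam * p ≠ 0 := hlp.ne'
      set A := x ^ p with hA
      set E := exp (-lam * A) with hE
      field_simp
    rw [halg, ← hFTC2]
    exact hmono
  · -- UPPER BOUND
    have hmono : (∫ t in Ioi x, exp (-lam * t ^ p))
        ≤ ∫ t in Ioi x, x ^ (1-p) * (t ^ (p-1) * exp (-lam * t ^ p)) := by
      refine setIntegral_mono_on hInt0 (hInt1.const_mul _) measurableSet_Ioi ?_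
      intro t htx
      have ht : 0 < t := lt_trans hx htx
      have hb : x ^ (p-1) ≤ t ^ (p-1) := rpow_le_rpow hx.le htx.le (by linarith)
      have he : (0:ℝ) < exp (-lam * t ^ p) := exp_pos _
      have hx1p' : (0:ℝ) < x ^ (1-p) := rpow_pos_of_pos hx _
      have h1 : (1:ℝ) ≤ x ^ (1-p) * t ^ (p-1) := by
        calc (1:ℝ) = x ^ (1-p) * x ^ (p-1) := hx1p.symm
          _ ≤ x ^ (1-p) * t ^ (p-1) := by nlinarith
      nlinarith
    rw [integral_const_mul, hFTC1] at hmono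
    refine hmono.trans_eq ?_
    rw [eq_div_iff (by positivity)]
    have : x ^ (1-p) * (exp (-lam * x ^ p) / (lam * p)) * (lam * p * x ^ (p-1))
        = (x ^ (1-p) * x ^ (p-1)) * ((lam * p) / (lam * p)) * exp (-lam * x ^ p) := by ring
    rw [this, hx1p, div_self hlp.ne']
    ring
end

section
/- For any 1/2 ≤ p ≤ 1, λ > 0 and x > 0, the tail integral satisfies (e^{-λx^p}/(λpx^{p-1}))·(1 + (1-p)/(λpx^p) + (1-p)(1-2p)/(λpx^p)^2) ≤ ∫_x^∞ e^{-λt^p} dt ≤ (e^{-λx^p}/(λpx^{p-1}))·(1 + (1-p)/(λpx^p)). -/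
open Real MeasureTheory Filter Set

private lemma exp_rpow_deriv_aux (lam p q : ℝ) {t : ℝ} (ht : 0 < t) :
    HasDerivAt (fun s : ℝ => Real.exp (-lam * s ^ p) * s ^ q)
      (Real.exp (-lam * t ^ p) *
        (q * t ^ (q - 1) - lam * p * (t ^ (p - 1) * t ^ q))) t := by
  have h1 : HasDerivAt (fun s : ℝ => s ^ p) (p * t ^ (p - 1)) t :=
    Real.hasDerivAt_rpow_const (Or.inl ht.ne')
  have h2 : HasDerivAt (fun s : ℝ => Real.exp (-lam * s ^ p))
      (Real.exp (-lam * t ^ p) * (-lam * (p * t ^ (p - 1)))) t :=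
    (h1.const_mul (-lam)).exp
  have h3 : HasDerivAt (fun s : ℝ => s ^ q) (q * t ^ (q - 1)) t :=
    Real.hasDerivAt_rpow_const (Or.inl ht.ne')
  exact (h2.mul h3).congr_deriv (by ring)

private lemma exp_rpow_tendsto_aux {lam p : ℝ} (hlam : 0 < lam) (hp : 0 < p) (s : ℝ) :
    Tendsto (fun t : ℝ => Real.exp (-lam * t ^ p) * t ^ s) atTop (nhds 0) := by
  have h1 : Tendsto (fun t : ℝ => t ^ p) atTop atTop := tendsto_rpow_atTop hp
  have h2 := (tendsto_rpow_mul_exp_neg_mul_atTop_nhds_zero (s / p) lam hlam).comp h1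
  refine h2.congr' ?_
  filter_upwards [eventually_gt_atTop (0:ℝ)] with t ht
  simp only [Function.comp]
  rw [← Real.rpow_mul ht.le, show p * (s / p) = s by field_simp]
  ring

set_option maxHeartbeats 1000000 in
theorem exp_power_tail_bounds_half (p lam x : ℝ) (hp1 : 1 / 2 ≤ p) (hp2 : p ≤ 1)
    (hlam : 0 < lam) (hx : 0 < x) :
    (Real.exp (-lam * x ^ p) / (lam * p * x ^ (p - 1))) *
        (1 + (1 - p) / (lam * p * x ^ p) + (1 - p) * (1 - 2 * p) / (lam * p * x ^ p) ^ 2)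
      ≤ ∫ t in Set.Ioi x, Real.exp (-lam * t ^ p) ∧
    ∫ t in Set.Ioi x, Real.exp (-lam * t ^ p)
      ≤ (Real.exp (-lam * x ^ p) / (lam * p * x ^ (p - 1))) * (1 + (1 - p) / (lam * p * x ^ p)) := by
  have hp0 : 0 < p := by linarith
  have hc : 0 < lam * p := mul_pos hlam hp0
  have hc' : lam * p ≠ 0 := hc.ne'
  -- upper antiderivative (negated)
  set G : ℝ → ℝ := fun t => -((1 / (lam * p)) * (Real.exp (-lam * t ^ p) * t ^ (1 - p)) +
      ((1 - p) / (lam * p) ^ 2) * (Real.exp (-lam * t ^ p) * t ^ (1 - 2 * p))) with hGdef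
  set gU : ℝ → ℝ := fun t =>
      Real.exp (-lam * t ^ p) * (1 - (1 - p) * (1 - 2 * p) / ((lam * p) ^ 2 * (t ^ p * t ^ p)))
    with hgUdef
  have hGderiv : ∀ t : ℝ, 0 < t → HasDerivAt G (gU t) t := by
    intro t ht
    have hu : (0:ℝ) < t ^ p := Real.rpow_pos_of_pos ht p
    have hd := (((exp_rpow_deriv_aux lam p (1 - p) ht).const_mul (1 / (lam * p))).add
      ((exp_rpow_deriv_aux lam p (1 - 2 * p) ht).const_mul ((1 - p) / (lam * p) ^ 2))).neg
    refine hd.congr_deriv ?_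
    simp only [hgUdef]
    rw [show (1 - p - 1 : ℝ) = -p by ring, show (1 - 2 * p - 1 : ℝ) = -p + -p by ring,
      show (1 - 2 * p : ℝ) = 1 + (-p + -p) by ring, show (1 - p : ℝ) = 1 + -p by ring,
      show (p - 1 : ℝ) = p + -(1:ℝ) by ring]
    have h1 : t ≠ 0 := ht.ne'
    have h2 : t ^ p ≠ 0 := hu.ne'
    have h3 : lam ≠ 0 := hlam.ne'
    have h4 : p ≠ 0 := hp0.ne'
    simp only [Real.rpow_add ht, Real.rpow_neg ht.le, Real.rpow_one]
    generalize t ^ p = u at h2 ⊢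
    field_simp
    ring
  have hGtendsto : Tendsto G atTop (nhds 0) := by
    have := (((exp_rpow_tendsto_aux hlam hp0 (1 - p)).const_mul (1 / (lam * p))).add
      ((exp_rpow_tendsto_aux hlam hp0 (1 - 2 * p)).const_mul ((1 - p) / (lam * p) ^ 2))).neg
    rw [hGdef]
    simpa only [mul_zero, add_zero, neg_zero] using this
  have hgUnonneg : ∀ t ∈ Set.Ioi x, 0 ≤ gU t := by
    intro t ht
    have ht0 : 0 < t := hx.trans ht
    have hu : (0:ℝ) < t ^ p := Real.rpow_pos_of_pos ht0 p
    have h1 : (1 - p) * (1 - 2 * p) ≤ 0 := by nlinarith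
    have h2 : (1 - p) * (1 - 2 * p) / ((lam * p) ^ 2 * (t ^ p * t ^ p)) ≤ 0 :=
      div_nonpos_of_nonpos_of_nonneg h1 (by positivity)
    have := Real.exp_pos (-lam * t ^ p)
    simp only [hgUdef]
    nlinarith
  have hderivIci : ∀ t ∈ Set.Ici x, HasDerivAt G (gU t) t :=
    fun t ht => hGderiv t (lt_of_lt_of_le hx ht)
  have hIU : IntegrableOn gU (Set.Ioi x) :=
    integrableOn_Ioi_deriv_of_nonneg' hderivIci hgUnonneg hGtendsto
  have hIntU : ∫ t in Set.Ioi x, gU t = 0 - G x :=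
    integral_Ioi_of_hasDerivAt_of_nonneg' hderivIci hgUnonneg hGtendsto
  -- integrability of the integrand
  have hmeas : AEStronglyMeasurable (fun t : ℝ => Real.exp (-lam * t ^ p))
      (volume.restrict (Set.Ioi x)) := by
    apply Measurable.aestronglyMeasurable
    fun_prop
  have hfle : ∀ t ∈ Set.Ioi x, Real.exp (-lam * t ^ p) ≤ gU t := by
    intro t ht
    have ht0 : 0 < t := hx.trans ht
    have hu : (0:ℝ) < t ^ p := Real.rpow_pos_of_pos ht0 p
    have h1 : (1 - p) * (1 - 2 * p) ≤ 0 := by nlinarith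
    have h2 : (1 - p) * (1 - 2 * p) / ((lam * p) ^ 2 * (t ^ p * t ^ p)) ≤ 0 :=
      div_nonpos_of_nonpos_of_nonneg h1 (by positivity)
    have := Real.exp_pos (-lam * t ^ p)
    simp only [hgUdef]
    nlinarith
  have hfint : IntegrableOn (fun t : ℝ => Real.exp (-lam * t ^ p)) (Set.Ioi x) := by
    refine hIU.mono' hmeas ?_
    filter_upwards [ae_restrict_mem measurableSet_Ioi] with t ht
    rw [Real.norm_eq_abs, abs_of_pos (Real.exp_pos _)]
    exact hfle t ht
  -- the upper bound
  have hupper : (∫ t in Set.Ioi x, Real.exp (-lam * t ^ p)) ≤ 0 - G x := by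
    rw [← hIntU]
    exact setIntegral_mono_on hfint hIU measurableSet_Ioi hfle
  -- lower antiderivative (negated)
  set L : ℝ → ℝ := fun t => -((1 / (lam * p)) * (Real.exp (-lam * t ^ p) * t ^ (1 - p)) +
      ((1 - p) / (lam * p) ^ 2) * (Real.exp (-lam * t ^ p) * t ^ (1 - 2 * p)) +
      ((1 - p) * (1 - 2 * p) / (lam * p) ^ 3) *
        (Real.exp (-lam * t ^ p) * t ^ (1 - 3 * p))) with hLdef
  set gL : ℝ → ℝ := fun t =>
      Real.exp (-lam * t ^ p) * (1 - (1 - p) * (1 - 2 * p) * (1 - 3 * p) /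
        ((lam * p) ^ 3 * (t ^ p * t ^ p * t ^ p))) with hgLdef
  have hLderiv : ∀ t : ℝ, 0 < t → HasDerivAt L (gL t) t := by
    intro t ht
    have hu : (0:ℝ) < t ^ p := Real.rpow_pos_of_pos ht p
    have hd := ((((exp_rpow_deriv_aux lam p (1 - p) ht).const_mul (1 / (lam * p))).add
      ((exp_rpow_deriv_aux lam p (1 - 2 * p) ht).const_mul ((1 - p) / (lam * p) ^ 2))).add
      ((exp_rpow_deriv_aux lam p (1 - 3 * p) ht).const_mul
        ((1 - p) * (1 - 2 * p) / (lam * p) ^ 3))).neg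
    refine hd.congr_deriv ?_
    simp only [hgLdef]
    rw [show (1 - p - 1 : ℝ) = -p by ring, show (1 - 2 * p - 1 : ℝ) = -p + -p by ring,
      show (1 - 3 * p - 1 : ℝ) = -p + -p + -p by ring,
      show (1 - 3 * p : ℝ) = 1 + (-p + -p + -p) by ring,
      show (1 - 2 * p : ℝ) = 1 + (-p + -p) by ring, show (1 - p : ℝ) = 1 + -p by ring,
      show (p - 1 : ℝ) = p + -(1:ℝ) by ring]
    have h1 : t ≠ 0 := ht.ne'
    have h2 : t ^ p ≠ 0 := hu.ne'
    have h3 : lam ≠ 0 := hlam.ne'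
    have h4 : p ≠ 0 := hp0.ne'
    simp only [Real.rpow_add ht, Real.rpow_neg ht.le, Real.rpow_one]
    generalize t ^ p = u at h2 ⊢
    field_simp
    ring
  have hLtendsto : Tendsto L atTop (nhds 0) := by
    have := ((((exp_rpow_tendsto_aux hlam hp0 (1 - p)).const_mul (1 / (lam * p))).add
      ((exp_rpow_tendsto_aux hlam hp0 (1 - 2 * p)).const_mul ((1 - p) / (lam * p) ^ 2))).add
      ((exp_rpow_tendsto_aux hlam hp0 (1 - 3 * p)).const_mul
        ((1 - p) * (1 - 2 * p) / (lam * p) ^ 3))).neg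
    rw [hLdef]
    simpa only [mul_zero, add_zero, neg_zero] using this
  -- integrability of gL
  have hxu : (0:ℝ) < x ^ p := Real.rpow_pos_of_pos hx p
  have haux3 : IntegrableOn
      (fun t : ℝ => Real.exp (-lam * t ^ p) * (t ^ p * t ^ p * t ^ p)⁻¹) (Set.Ioi x) := by
    refine (hfint.const_mul ((x ^ p * x ^ p * x ^ p)⁻¹)).mono' ?_ ?_
    · apply Measurable.aestronglyMeasurable
      fun_prop
    · filter_upwards [ae_restrict_mem measurableSet_Ioi] with t ht
      have ht0 : 0 < t := hx.trans ht
      have htu : (0:ℝ) < t ^ p := Real.rpow_pos_of_pos ht0 p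
      have hle : x ^ p ≤ t ^ p := Real.rpow_le_rpow hx.le (le_of_lt ht) hp0.le
      rw [Real.norm_eq_abs, abs_of_pos (by positivity)]
      rw [mul_comm ((x ^ p * x ^ p * x ^ p)⁻¹) _]
      apply mul_le_mul_of_nonneg_left _ (Real.exp_pos _).le
      apply inv_anti₀ (by positivity)
      gcongr
  have hIL : IntegrableOn gL (Set.Ioi x) := by
    have : IntegrableOn (fun t : ℝ => Real.exp (-lam * t ^ p) -
        ((1 - p) * (1 - 2 * p) * (1 - 3 * p) / (lam * p) ^ 3) *
          (Real.exp (-lam * t ^ p) * (t ^ p * t ^ p * t ^ p)⁻¹)) (Set.Ioi x) :=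
      hfint.sub (haux3.const_mul _)
    refine this.congr_fun ?_ measurableSet_Ioi
    intro t ht
    have ht0 : 0 < t := hx.trans ht
    have htu : (0:ℝ) < t ^ p := Real.rpow_pos_of_pos ht0 p
    simp only [hgLdef]
    field_simp
  have hIntL : ∫ t in Set.Ioi x, gL t = 0 - L x :=
    integral_Ioi_of_hasDerivAt_of_tendsto'
      (fun t ht => hLderiv t (lt_of_lt_of_le hx ht)) hIL hLtendsto
  have hlower : 0 - L x ≤ ∫ t in Set.Ioi x, Real.exp (-lam * t ^ p) := by
    rw [← hIntL]
    refine setIntegral_mono_on hIL hfint measurableSet_Ioi ?_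
    intro t ht
    have ht0 : 0 < t := hx.trans ht
    have htu : (0:ℝ) < t ^ p := Real.rpow_pos_of_pos ht0 p
    have h1 : 0 ≤ (1 - p) * (1 - 2 * p) * (1 - 3 * p) := by
      nlinarith [mul_nonneg (mul_nonneg (by linarith : (0:ℝ) ≤ 1 - p)
        (by linarith : (0:ℝ) ≤ 2 * p - 1)) (by linarith : (0:ℝ) ≤ 3 * p - 1)]
    have h2 : 0 ≤ (1 - p) * (1 - 2 * p) * (1 - 3 * p) /
        ((lam * p) ^ 3 * (t ^ p * t ^ p * t ^ p)) := by positivity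
    have := Real.exp_pos (-lam * t ^ p)
    simp only [hgLdef]
    nlinarith
  -- identify the closed forms
  have hxid : ∀ a : ℝ, x ^ (1 - a) = x * (x ^ a)⁻¹ := by
    intro a
    rw [show (1 - a : ℝ) = 1 + -a by ring, Real.rpow_add hx, Real.rpow_neg hx.le, Real.rpow_one]
  have hxp1 : x ^ (p - 1) = x ^ p * x⁻¹ := by
    rw [show (p - 1 : ℝ) = p + -(1:ℝ) by ring, Real.rpow_add hx, Real.rpow_neg hx.le,
      Real.rpow_one]
  have hx2 : x ^ (1 - 2 * p) = x * (x ^ p)⁻¹ * (x ^ p)⁻¹ := by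
    rw [show (1 - 2 * p : ℝ) = 1 + (-p + -p) by ring, Real.rpow_add hx, Real.rpow_add hx,
      Real.rpow_neg hx.le, Real.rpow_one]
    ring
  have hx3 : x ^ (1 - 3 * p) = x * (x ^ p)⁻¹ * (x ^ p)⁻¹ * (x ^ p)⁻¹ := by
    rw [show (1 - 3 * p : ℝ) = 1 + (-p + -p + -p) by ring, Real.rpow_add hx, Real.rpow_add hx,
      Real.rpow_add hx, Real.rpow_neg hx.le, Real.rpow_one]
    ring
  constructor
  · refine le_trans (le_of_eq ?_) hlower
    simp only [hLdef, hxid p, hxp1, hx2, hx3]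
    have hune : x ^ p ≠ 0 := hxu.ne'
    have hxne : x ≠ 0 := hx.ne'
    have h3 : lam ≠ 0 := hlam.ne'
    have h4 : p ≠ 0 := hp0.ne'
    generalize x ^ p = u at hune ⊢
    field_simp
    ring
  · refine le_trans hupper (le_of_eq ?_)
    simp only [hGdef, hxid p, hxp1, hx2]
    have hune : x ^ p ≠ 0 := hxu.ne'
    have hxne : x ≠ 0 := hx.ne'
    have h3 : lam ≠ 0 := hlam.ne'
    have h4 : p ≠ 0 := hp0.ne'
    generalize x ^ p = u at hune ⊢
    field_simp
    ring
end

section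
/- Let T(z) = (P⁰)^{-1}(Φ⁰(z)) be the monotone transport map pushing the standard normal to the Laplace distribution with density π⁰(x) = (λ/2)e^{-λ|x|}, λ > 0. Then for z > 0, T(z) = -(1/λ)·log(2Φ⁰(-z)), and T(z) ~ z²/(2λ) as z → ∞. -/
open Real MeasureTheory Filter
open Set

/-- The standard normal cumulative distribution function. -/
noncomputable def stdNormalCDF (z : ℝ) : ℝ :=
  ∫ t in Set.Iic z, (1 / Real.sqrt (2 * Real.pi)) * Real.exp (-t ^ 2 / 2)

/-- The CDF of the Laplace distribution with parameter `lam`. -/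
noncomputable def laplaceCDF (lam : ℝ) (x : ℝ) : ℝ :=
  ∫ t in Set.Iic x, (lam / 2) * Real.exp (-lam * |t|)

/-! Gaussian density facts -/

lemma phi_pos (t : ℝ) : 0 < (1 / Real.sqrt (2 * Real.pi)) * Real.exp (-t ^ 2 / 2) := by
  have : 0 < Real.sqrt (2 * Real.pi) := Real.sqrt_pos.mpr (by positivity)
  positivity

lemma phi_integrable :
    Integrable (fun t : ℝ => (1 / Real.sqrt (2 * Real.pi)) * Real.exp (-t ^ 2 / 2)) := by
  have h := (integrable_exp_neg_mul_sq (by norm_num : (0:ℝ) < 1/2)).const_mul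
    (1 / Real.sqrt (2 * Real.pi))
  refine h.congr (Eventually.of_forall fun t => ?_)
  ring_nf

lemma phi_total :
    ∫ t : ℝ, (1 / Real.sqrt (2 * Real.pi)) * Real.exp (-t ^ 2 / 2) = 1 := by
  have h : ∫ t : ℝ, Real.exp (-(1/2) * t ^ 2) = Real.sqrt (2 * Real.pi) := by
    rw [integral_gaussian]
    rw [show Real.pi / (1/2) = 2 * Real.pi by ring]
  have he : (fun t : ℝ => Real.exp (-t ^ 2 / 2)) = fun t : ℝ => Real.exp (-(1/2) * t ^ 2) := by
    funext t; ring_nf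
  rw [MeasureTheory.integral_const_mul, he, h]
  have : Real.sqrt (2 * Real.pi) ≠ 0 := (Real.sqrt_pos.mpr (by positivity)).ne'
  field_simp

lemma phi_setIntegral_pos {a b : ℝ} (h : a < b) :
    0 < ∫ t in Ioc a b, (1 / Real.sqrt (2 * Real.pi)) * Real.exp (-t ^ 2 / 2) := by
  rw [setIntegral_pos_iff_support_of_nonneg_ae
    (ae_of_all _ fun t => (phi_pos t).le) phi_integrable.integrableOn]
  have hs : Function.support (fun t : ℝ => (1 / Real.sqrt (2 * Real.pi)) * Real.exp (-t ^ 2 / 2))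
      = univ := by
    ext t
    simp only [Function.mem_support, mem_univ, iff_true]
    exact (phi_pos t).ne'
  rw [hs, univ_inter, Real.volume_Ioc]
  simp [h]

lemma stdNormal_add (z : ℝ) : stdNormalCDF z + stdNormalCDF (-z) = 1 := by
  have hsym : stdNormalCDF (-z)
      = ∫ t in Ioi z, (1 / Real.sqrt (2 * Real.pi)) * Real.exp (-t ^ 2 / 2) := by
    rw [stdNormalCDF, ← integral_comp_neg_Ioi]
    refine setIntegral_congr_fun measurableSet_Ioi fun t _ => ?_
    simp [neg_sq]
  rw [stdNormalCDF, hsym, ← setIntegral_union (Iic_disjoint_Ioi le_rfl) measurableSet_Ioi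
    phi_integrable.integrableOn phi_integrable.integrableOn, Iic_union_Ioi,
    setIntegral_univ, phi_total]

lemma stdNormal_lt {a b : ℝ} (h : a < b) : stdNormalCDF a < stdNormalCDF b := by
  have hsplit : stdNormalCDF b = stdNormalCDF a
      + ∫ t in Ioc a b, (1 / Real.sqrt (2 * Real.pi)) * Real.exp (-t ^ 2 / 2) := by
    rw [stdNormalCDF, stdNormalCDF, ← setIntegral_union
      ((Iic_disjoint_Ioi le_rfl).mono_right Ioc_subset_Ioi_self) measurableSet_Ioc
      phi_integrable.integrableOn phi_integrable.integrableOn, Iic_union_Ioc_eq_Iic h.le]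
  rw [hsplit]
  linarith [phi_setIntegral_pos h]

lemma stdNormal_pos (z : ℝ) : 0 < stdNormalCDF z := by
  have h1 : 0 < ∫ t in Ioc (z-1) z, (1 / Real.sqrt (2 * Real.pi)) * Real.exp (-t ^ 2 / 2) :=
    phi_setIntegral_pos (by linarith)
  have h2 : (∫ t in Ioc (z-1) z, (1 / Real.sqrt (2 * Real.pi)) * Real.exp (-t ^ 2 / 2))
      ≤ stdNormalCDF z := by
    rw [stdNormalCDF]
    refine setIntegral_mono_set phi_integrable.integrableOn
      (ae_of_all _ fun t => (phi_pos t).le) (HasSubset.Subset.eventuallyLE Ioc_subset_Iic_self)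
  linarith

lemma stdNormal_zero : stdNormalCDF 0 = 1/2 := by
  have := stdNormal_add 0
  rw [neg_zero] at this
  linarith

/-! Laplace CDF facts -/

lemma laplace_integrableOn_Ioi (lam : ℝ) (hlam : 0 < lam) {x : ℝ} (hx : 0 ≤ x) :
    IntegrableOn (fun t : ℝ => (lam / 2) * Real.exp (-lam * |t|)) (Ioi x) := by
  have base : IntegrableOn (fun t : ℝ => (lam / 2) * Real.exp (-lam * t)) (Ioi x) volume :=
    (exp_neg_integrableOn_Ioi x hlam).const_mul (lam/2)
  refine base.congr_fun (fun t ht => ?_) measurableSet_Ioi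
  rw [abs_of_pos (lt_of_le_of_lt hx (mem_Ioi.mp ht))]

lemma laplace_integrableOn_Iic (lam : ℝ) (hlam : 0 < lam) (x : ℝ) :
    IntegrableOn (fun t : ℝ => (lam / 2) * Real.exp (-lam * |t|)) (Iic x) := by
  have h1 : IntegrableOn (fun t : ℝ => (lam / 2) * Real.exp (-lam * |t|)) (Iic 0) := by
    have base : IntegrableOn (fun t : ℝ => (lam / 2) * Real.exp (lam * t)) (Iic 0) volume :=
      (integrableOn_exp_mul_Iic hlam 0).const_mul (lam/2)
    refine base.congr_fun (fun t ht => ?_) measurableSet_Iic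
    rw [abs_of_nonpos (mem_Iic.mp ht)]
    ring_nf
  have h2 := laplace_integrableOn_Ioi lam hlam (le_refl 0)
  have := h1.union h2
  rw [Iic_union_Ioi] at this
  exact this.mono_set (subset_univ _)

lemma laplaceCDF_nonpos {lam : ℝ} (hlam : 0 < lam) {x : ℝ} (hx : x ≤ 0) :
    laplaceCDF lam x = Real.exp (lam * x) / 2 := by
  rw [laplaceCDF]
  have h : ∀ t ∈ Iic x, (lam / 2) * Real.exp (-lam * |t|) = (lam / 2) * Real.exp (lam * t) := by
    intro t ht
    rw [abs_of_nonpos (le_trans (mem_Iic.mp ht) hx)]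
    ring_nf
  rw [setIntegral_congr_fun measurableSet_Iic h, MeasureTheory.integral_const_mul,
    integral_exp_mul_Iic hlam]
  field_simp

lemma laplace_integral_Ioi {lam : ℝ} (hlam : 0 < lam) {x : ℝ} (hx : 0 ≤ x) :
    ∫ t in Ioi x, (lam / 2) * Real.exp (-lam * |t|) = Real.exp (-lam * x) / 2 := by
  have h1 : ∀ t ∈ Ioi x, (lam / 2) * Real.exp (-lam * |t|)
      = (lam / 2) * Real.exp (lam * (-t)) := by
    intro t ht
    rw [abs_of_pos (lt_of_le_of_lt hx (mem_Ioi.mp ht))]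
    ring_nf
  have h2 := integral_comp_neg_Ioi x (fun s : ℝ => (lam / 2) * Real.exp (lam * s))
  rw [setIntegral_congr_fun measurableSet_Ioi h1, h2, MeasureTheory.integral_const_mul,
    integral_exp_mul_Iic hlam]
  rw [show lam * -x = -lam * x by ring]
  field_simp

lemma laplace_total {lam : ℝ} (hlam : 0 < lam) :
    ∫ t : ℝ, (lam / 2) * Real.exp (-lam * |t|) = 1 := by
  have h0 : laplaceCDF lam 0 = 1/2 := by
    rw [laplaceCDF_nonpos hlam le_rfl]; simp
  have h1 : ∫ t in Ioi (0:ℝ), (lam / 2) * Real.exp (-lam * |t|) = 1/2 := by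
    rw [laplace_integral_Ioi hlam le_rfl]; simp
  have hs := setIntegral_union (Iic_disjoint_Ioi le_rfl) measurableSet_Ioi
    (laplace_integrableOn_Iic lam hlam 0) (laplace_integrableOn_Ioi lam hlam (le_refl 0))
  rw [Iic_union_Ioi] at hs
  rw [← setIntegral_univ, hs, ← laplaceCDF, h0, h1]
  norm_num

lemma laplaceCDF_nonneg {lam : ℝ} (hlam : 0 < lam) {x : ℝ} (hx : 0 ≤ x) :
    laplaceCDF lam x = 1 - Real.exp (-lam * x) / 2 := by
  have hsplit := setIntegral_union (Iic_disjoint_Ioi (le_refl x)) measurableSet_Ioi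
    (laplace_integrableOn_Iic lam hlam x) (laplace_integrableOn_Ioi lam hlam hx)
  rw [Iic_union_Ioi, setIntegral_univ, laplace_total hlam, laplace_integral_Ioi hlam hx,
    ← laplaceCDF] at hsplit
  linarith

/-! Gaussian tail bounds -/

lemma tail_ub {z : ℝ} (hz : 0 < z) :
    stdNormalCDF (-z) ≤ (1 / Real.sqrt (2 * Real.pi)) * (Real.exp (-z^2/2) / z) := by
  have hmono : stdNormalCDF (-z) ≤ ∫ t in Iic (-z),
      (1 / Real.sqrt (2 * Real.pi)) * (Real.exp (z^2/2) * Real.exp (z * t)) := by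
    rw [stdNormalCDF]
    refine setIntegral_mono_on phi_integrable.integrableOn ?_ measurableSet_Iic fun t _ => ?_
    · exact (((integrableOn_exp_mul_Iic hz (-z)).const_mul _).const_mul _)
    · have h1 : -t^2/2 ≤ z^2/2 + z*t := by nlinarith [sq_nonneg (z+t)]
      have := Real.exp_le_exp.mpr h1
      rw [Real.exp_add] at this
      have hs : (0:ℝ) < 1 / Real.sqrt (2 * Real.pi) := by
        have : 0 < Real.sqrt (2 * Real.pi) := Real.sqrt_pos.mpr (by positivity)
        positivity
      exact mul_le_mul_of_nonneg_left this hs.le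
  have hcalc : ∫ t in Iic (-z),
      (1 / Real.sqrt (2 * Real.pi)) * (Real.exp (z^2/2) * Real.exp (z * t))
      = (1 / Real.sqrt (2 * Real.pi)) * (Real.exp (-z^2/2) / z) := by
    rw [MeasureTheory.integral_const_mul, MeasureTheory.integral_const_mul,
      integral_exp_mul_Iic hz]
    rw [show z * -z = -(z*z) by ring, mul_div_assoc' (Real.exp (z^2/2)) _ z, ← Real.exp_add]
    ring_nf
  linarith [hmono, hcalc.le, hcalc.ge]

lemma tail_lb {z : ℝ} (hz : 0 < z) :
    (1 / Real.sqrt (2 * Real.pi)) * Real.exp (-(z+1)^2/2) ≤ stdNormalCDF (-z) := by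
  set c : ℝ := (1 / Real.sqrt (2 * Real.pi)) * Real.exp (-(z+1)^2/2) with hc
  have h1 : c * (volume (Ioc (-z-1) (-z))).toReal
      ≤ ∫ t in Ioc (-z-1) (-z), (1 / Real.sqrt (2 * Real.pi)) * Real.exp (-t ^ 2 / 2) := by
    refine setIntegral_ge_of_const_le_real measurableSet_Ioc (by simp) (fun t ht => ?_)
      phi_integrable.integrableOn
    have ht1 := ht.1
    have ht2 := ht.2
    have h2 : -(z+1)^2/2 ≤ -t^2/2 := by nlinarith
    have hs : (0:ℝ) < 1 / Real.sqrt (2 * Real.pi) := by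
      have : 0 < Real.sqrt (2 * Real.pi) := Real.sqrt_pos.mpr (by positivity)
      positivity
    exact mul_le_mul_of_nonneg_left (Real.exp_le_exp.mpr h2) hs.le
  have hvol : (volume (Ioc (-z-1) (-z))).toReal = 1 := by
    rw [Real.volume_Ioc]
    norm_num
  rw [hvol, mul_one] at h1
  have h3 : (∫ t in Ioc (-z-1) (-z), (1 / Real.sqrt (2 * Real.pi)) * Real.exp (-t ^ 2 / 2))
      ≤ stdNormalCDF (-z) := by
    rw [stdNormalCDF]
    exact setIntegral_mono_set phi_integrable.integrableOn
      (ae_of_all _ fun t => (phi_pos t).le) (HasSubset.Subset.eventuallyLE Ioc_subset_Iic_self)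
  linarith

theorem laplace_transport_formula_and_asymptotics (lam : ℝ) (hlam : 0 < lam)
    (T : ℝ → ℝ) (hT : ∀ z, laplaceCDF lam (T z) = stdNormalCDF z) :
    (∀ z, 0 < z → T z = -(1 / lam) * Real.log (2 * stdNormalCDF (-z))) ∧
    Tendsto (fun z => T z / (z ^ 2 / (2 * lam))) atTop (nhds 1) := by
  have key : ∀ z, 0 < z → T z = -(1 / lam) * Real.log (2 * stdNormalCDF (-z)) := by
    intro z hz
    have hΦlt : stdNormalCDF (-z) < 1/2 := by
      have h := stdNormal_lt (show -z < 0 by linarith)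
      rwa [stdNormal_zero] at h
    have hΦpos := stdNormal_pos (-z)
    have hadd := stdNormal_add z
    have hTz : laplaceCDF lam (T z) = stdNormalCDF z := hT z
    have hpos : 0 < T z := by
      by_contra h
      push_neg at h
      rw [laplaceCDF_nonpos hlam h] at hTz
      have hle : Real.exp (lam * T z) ≤ 1 :=
        Real.exp_le_one_iff.mpr (mul_nonpos_of_nonneg_of_nonpos hlam.le h)
      linarith
    rw [laplaceCDF_nonneg hlam hpos.le] at hTz
    have h2 : Real.exp (-lam * T z) = 2 * stdNormalCDF (-z) := by linarith
    have h3 : Real.log (2 * stdNormalCDF (-z)) = -lam * T z := by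
      rw [← h2, Real.log_exp]
    rw [h3]
    field_simp
  refine ⟨key, ?_⟩
  set s : ℝ := Real.sqrt (2 * Real.pi) with hs
  have hspos : 0 < s := Real.sqrt_pos.mpr (by positivity)
  have hs2 : 2 ≤ s := by
    rw [show (2:ℝ) = Real.sqrt 4 by
      rw [show (4:ℝ) = 2^2 by norm_num, Real.sqrt_sq (by norm_num : (0:ℝ) ≤ 2)]]
    exact Real.sqrt_le_sqrt (by nlinarith [Real.pi_gt_three])
  set C : ℝ := Real.log (2 / s) with hC
  -- upper bound on log
  have hup : ∀ z : ℝ, 1 ≤ z → Real.log (2 * stdNormalCDF (-z)) ≤ -z^2/2 := by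
    intro z hz1
    have hz : (0:ℝ) < z := by linarith
    have hΦpos := stdNormal_pos (-z)
    have h1 := tail_ub hz
    have hE : (0:ℝ) < Real.exp (-z^2/2) := Real.exp_pos _
    rw [← hs] at h1
    have h2 : 2 * stdNormalCDF (-z) ≤ Real.exp (-z^2/2) := by
      have hsz : 0 < s * z := mul_pos hspos hz
      have h3 : 2 * (1/s * (Real.exp (-z^2/2)/z)) ≤ Real.exp (-z^2/2) := by
        rw [show 2 * (1/s * (Real.exp (-z^2/2)/z)) = 2 * Real.exp (-z^2/2) / (s*z) by
          field_simp]
        rw [div_le_iff₀ hsz]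
        have hszge : 2 ≤ s * z := by nlinarith
        nlinarith [mul_le_mul_of_nonneg_left hszge hE.le]
      linarith
    exact (Real.log_le_iff_le_exp (by positivity)).mpr h2
  -- lower bound on log
  have hlo : ∀ z : ℝ, 1 ≤ z → C - (z+1)^2/2 ≤ Real.log (2 * stdNormalCDF (-z)) := by
    intro z hz1
    have hz : (0:ℝ) < z := by linarith
    have hΦpos := stdNormal_pos (-z)
    have h1 := tail_lb hz
    rw [← hs] at h1
    have h2 : (2/s) * Real.exp (-(z+1)^2/2) ≤ 2 * stdNormalCDF (-z) := by
      have : 2 * ((1/s) * Real.exp (-(z+1)^2/2)) ≤ 2 * stdNormalCDF (-z) := by linarith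
      linarith [this, (by ring : (2/s) * Real.exp (-(z+1)^2/2)
        = 2 * ((1/s) * Real.exp (-(z+1)^2/2)))]
    have h3 : Real.log ((2/s) * Real.exp (-(z+1)^2/2)) ≤ Real.log (2 * stdNormalCDF (-z)) :=
      Real.log_le_log (by positivity) h2
    rw [Real.log_mul (by positivity) (Real.exp_ne_zero _), Real.log_exp] at h3
    rw [hC]
    linarith
  -- squeeze
  have hfun : ∀ z : ℝ, 1 ≤ z →
      T z / (z ^ 2 / (2 * lam)) = -2 * Real.log (2 * stdNormalCDF (-z)) / z^2 := by
    intro z hz1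
    have hz : (0:ℝ) < z := by linarith
    rw [key z hz]
    field_simp
  have hu : Tendsto (fun z : ℝ => ((z+1)^2 - 2*C)/z^2) atTop (nhds 1) := by
    have h2z : Tendsto (fun z : ℝ => 2/z) atTop (nhds 0) :=
      tendsto_const_nhds.div_atTop tendsto_id
    have h1z : Tendsto (fun z : ℝ => (1-2*C)/z^2) atTop (nhds 0) :=
      tendsto_const_nhds.div_atTop (tendsto_pow_atTop two_ne_zero)
    have hsum := ((tendsto_const_nhds (x := (1:ℝ)) (f := (atTop : Filter ℝ))).add h2z).add h1z
    rw [add_zero, add_zero] at hsum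
    refine hsum.congr' ?_
    filter_upwards [eventually_ge_atTop (1:ℝ)] with z hz1
    have hz : (0:ℝ) < z := by linarith
    field_simp
    ring
  refine tendsto_of_tendsto_of_tendsto_of_le_of_le' tendsto_const_nhds hu ?_ ?_
  · filter_upwards [eventually_ge_atTop (1:ℝ)] with z hz1
    have hz : (0:ℝ) < z := by linarith
    have hz2 : (0:ℝ) < z^2 := by positivity
    rw [hfun z hz1, le_div_iff₀ hz2]
    linarith [hup z hz1]
  · filter_upwards [eventually_ge_atTop (1:ℝ)] with z hz1
    have hz : (0:ℝ) < z := by linarith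
    have hz2 : (0:ℝ) < z^2 := by positivity
    rw [hfun z hz1, div_le_div_iff₀ hz2 hz2]
    nlinarith [hlo z hz1]
end

section
/- Let T(z) = (P⁰)^{-1}(Φ⁰(z)) be the monotone transport map pushing the standard normal to the exponential power distribution with density proportional to e^{-λ|x|^p}, p, λ > 0. Then T(z) ~ (z²/(2λ))^{1/p} as z → ∞. -/
open Real MeasureTheory Filter

/-- Normalizing constant of the exponential power distribution. -/
noncomputable def expPowerZ (p lam : ℝ) : ℝ := ∫ x : ℝ, Real.exp (-lam * |x| ^ p)

/-- The CDF of the exponential power distribution with parameters `p, lam`. -/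
noncomputable def expPowerCDF (p lam : ℝ) (x : ℝ) : ℝ :=
  ∫ t in Set.Iic x, (expPowerZ p lam)⁻¹ * Real.exp (-lam * |t| ^ p)

open Set

section Aux

lemma auxCont (b p : ℝ) (hp : 0 ≤ p) : Continuous fun t : ℝ => Real.exp (-b * t ^ p) :=
  Real.continuous_exp.comp (continuous_const.mul (continuous_id.rpow_const fun _ => Or.inr hp))

lemma auxContAbs (b p : ℝ) (hp : 0 ≤ p) : Continuous fun t : ℝ => Real.exp (-b * |t| ^ p) :=
  Real.continuous_exp.comp (continuous_const.mul (continuous_abs.rpow_const fun _ => Or.inr hp))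

lemma auxIntOn {p b : ℝ} (hp : 0 < p) (hb : 0 < b) :
    IntegrableOn (fun t : ℝ => Real.exp (-b * t ^ p)) (Ioi 0) := by
  have hlo : (fun t : ℝ => Real.exp (-b * t ^ p)) =o[atTop] fun t : ℝ => t ^ (-2 : ℝ) := by
    have h1 := isLittleO_exp_neg_mul_rpow_atTop hb (-2 / p)
    have h2 := h1.comp_tendsto (tendsto_rpow_atTop hp)
    refine h2.congr' (by rfl) ?_
    filter_upwards [eventually_gt_atTop (0 : ℝ)] with t ht
    simp only [Function.comp]
    rw [← Real.rpow_mul ht.le, mul_div_cancel₀ _ hp.ne']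
  have hbd := hlo.bound one_pos
  rw [eventually_atTop] at hbd
  obtain ⟨C₀, hC⟩ := hbd
  set C := max C₀ 1 with hCdef
  have hC1 : (1 : ℝ) ≤ C := le_max_right _ _
  have hC0 : (0 : ℝ) < C := lt_of_lt_of_le one_pos hC1
  have htail : IntegrableOn (fun t : ℝ => Real.exp (-b * t ^ p)) (Ioi C) := by
    refine Integrable.mono' (g := fun t : ℝ => t ^ (-2 : ℝ))
      (integrableOn_Ioi_rpow_of_lt (by norm_num) hC0)
      ((auxCont b p hp.le).aestronglyMeasurable.restrict) ?_
    filter_upwards [ae_restrict_mem measurableSet_Ioi] with t ht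
    have := hC t (le_trans (le_max_left _ _) (le_of_lt ht))
    rw [one_mul] at this
    refine this.trans ?_
    rw [Real.norm_eq_abs, abs_of_nonneg (Real.rpow_nonneg (le_trans hC0.le ht.le) _)]
  have hcompact : IntegrableOn (fun t : ℝ => Real.exp (-b * t ^ p)) (Ioc 0 C) :=
    ((auxCont b p hp.le).integrableOn_Icc (a := 0) (b := C)).mono_set Ioc_subset_Icc_self
  have : IntegrableOn (fun t : ℝ => Real.exp (-b * t ^ p)) (Ioc 0 C ∪ Ioi C) :=
    hcompact.union htail
  rwa [Ioc_union_Ioi_eq_Ioi hC0.le] at this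

lemma auxIntOn' {p b : ℝ} (hp : 0 < p) (hb : 0 < b) {x : ℝ} (hx : 0 ≤ x) :
    IntegrableOn (fun t : ℝ => Real.exp (-b * t ^ p)) (Ioi x) :=
  (auxIntOn hp hb).mono_set (Ioi_subset_Ioi hx)

lemma auxIntAbs {p b : ℝ} (hp : 0 < p) (hb : 0 < b) :
    Integrable (fun t : ℝ => Real.exp (-b * |t| ^ p)) := by
  have hIoi : IntegrableOn (fun t : ℝ => Real.exp (-b * |t| ^ p)) (Ioi 0) := by
    refine (auxIntOn hp hb).congr_fun (fun t ht => ?_) measurableSet_Ioi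
    rw [abs_of_pos ht]
  have hIic : IntegrableOn (fun t : ℝ => Real.exp (-b * |t| ^ p)) (Iic 0) := by
    rw [← Measure.map_neg_eq_self (volume : Measure ℝ)]
    have m : MeasurableEmbedding fun x : ℝ => -x := (Homeomorph.neg ℝ).measurableEmbedding
    rw [m.integrableOn_map_iff]
    simp_rw [Function.comp_def, abs_neg, neg_preimage, neg_Iic, neg_zero]
    exact (integrableOn_Ici_iff_integrableOn_Ioi).mpr hIoi
  have := hIic.union hIoi
  rwa [Iic_union_Ioi, integrableOn_univ] at this

lemma auxLower {p b : ℝ} (hp : 0 < p) (hb : 0 < b) {x : ℝ} (hx : 0 ≤ x) :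
    Real.exp (-b * (x + 1) ^ p) ≤ ∫ t in Ioi x, Real.exp (-b * t ^ p) := by
  have h1 : Real.exp (-b * (x + 1) ^ p) ≤ ∫ t in Ioc x (x + 1), Real.exp (-b * t ^ p) := by
    have hconst : ∫ _ in Ioc x (x + 1), Real.exp (-b * (x + 1) ^ p)
        = Real.exp (-b * (x + 1) ^ p) := by
      rw [setIntegral_const, Real.volume_real_Ioc]
      simp
    rw [← hconst]
    refine setIntegral_mono_on ((integrableOn_const_iff).mpr ?_)
      ((auxIntOn' hp hb hx).mono_set Ioc_subset_Ioi_self) measurableSet_Ioc fun t ht => ?_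
    · right; rw [Real.volume_Ioc]; simp
    · have htp : t ^ p ≤ (x + 1) ^ p :=
        Real.rpow_le_rpow (le_trans hx ht.1.le) ht.2 hp.le
      exact Real.exp_le_exp.mpr (by nlinarith)
  refine h1.trans (setIntegral_mono_set (auxIntOn' hp hb hx) ?_ ?_)
  · filter_upwards with t using Real.exp_nonneg _
  · exact HasSubset.Subset.eventuallyLE Ioc_subset_Ioi_self

lemma auxPowSucc {p : ℝ} (hp : 0 < p) {δ : ℝ} (hδ : 0 < δ) :
    ∀ᶠ x : ℝ in atTop, (x + 1) ^ p ≤ (1 + δ) * x ^ p := by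
  have hb : Tendsto (fun x : ℝ => 1 + 1 / x) atTop (nhds 1) := by
    have h := (tendsto_const_nhds (x := (1:ℝ)) (f := atTop (α := ℝ))).add
      tendsto_inv_atTop_zero
    rw [add_zero] at h
    simpa [one_div] using h
  have h1 : Tendsto (fun x : ℝ => (1 + 1 / x) ^ p) atTop (nhds 1) := by
    have hc := (Real.continuousAt_rpow_const 1 p (Or.inl one_ne_zero)).tendsto.comp hb
    simpa [Function.comp_def] using hc
  filter_upwards [h1.eventually_le_const (by linarith : (1:ℝ) < 1 + δ),
    eventually_gt_atTop (0 : ℝ)] with x hx1 hx0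
  have hxx : x + 1 = x * (1 + 1 / x) := by field_simp
  rw [hxx, Real.mul_rpow hx0.le (by positivity)]
  have hxp : (0:ℝ) ≤ x ^ p := Real.rpow_nonneg hx0.le _
  nlinarith [Real.rpow_nonneg (by positivity : (0:ℝ) ≤ 1 + 1/x) p]

lemma auxScaleTop {p b : ℝ} (hp : 0 < p) (hb : 0 < b) :
    Tendsto (fun x : ℝ => b * x ^ p) atTop atTop :=
  (tendsto_rpow_atTop hp).const_mul_atTop hb

lemma tailTendsto {p b : ℝ} (hp : 0 < p) (hb : 0 < b) :
    Tendsto (fun x : ℝ => -Real.log (∫ t in Ioi x, Real.exp (-b * t ^ p)) / (b * x ^ p))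
      atTop (nhds 1) := by
  have hstop := auxScaleTop hp hb
  refine Metric.tendsto_nhds.mpr fun ε hε => ?_
  set δ : ℝ := min (ε / 2) (1 / 2) with hδdef
  have hδ0 : 0 < δ := lt_min (by linarith) (by norm_num)
  have hδε : δ < ε := lt_of_le_of_lt (min_le_left _ _) (by linarith)
  have hδhalf : δ ≤ 1 / 2 := min_le_right _ _
  have hδb : 0 < δ / 2 * b := by positivity
  set C : ℝ := ∫ t in Ioi (0 : ℝ), Real.exp (-(δ / 2 * b) * t ^ p) with hCdef
  have hexp : Tendsto (fun x : ℝ => Real.exp (δ / 2 * (b * x ^ p))) atTop atTop :=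
    Real.tendsto_exp_atTop.comp (hstop.const_mul_atTop (by positivity))
  have hU : ∀ᶠ x : ℝ in atTop,
      (∫ t in Ioi x, Real.exp (-b * t ^ p)) ≤ Real.exp (-((1 - δ) * (b * x ^ p))) := by
    filter_upwards [eventually_gt_atTop (0 : ℝ), hexp.eventually_ge_atTop C] with x hx0 hxC
    have step1 : (∫ t in Ioi x, Real.exp (-b * t ^ p))
        ≤ ∫ t in Ioi x, Real.exp (-((1 - δ / 2) * (b * x ^ p))) * Real.exp (-(δ / 2 * b) * t ^ p) := by
      refine setIntegral_mono_on (auxIntOn' hp hb hx0.le)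
        ((auxIntOn' hp hδb hx0.le).const_mul _) measurableSet_Ioi fun t ht => ?_
      rw [← Real.exp_add]
      refine Real.exp_le_exp.mpr ?_
      have htp : x ^ p ≤ t ^ p := Real.rpow_le_rpow hx0.le (le_of_lt ht) hp.le
      nlinarith [mul_nonneg (mul_nonneg (by linarith : (0:ℝ) ≤ 1 - δ / 2) hb.le)
        (sub_nonneg.mpr htp)]
    have step2 : (∫ t in Ioi x, Real.exp (-((1 - δ / 2) * (b * x ^ p))) * Real.exp (-(δ / 2 * b) * t ^ p))
        = Real.exp (-((1 - δ / 2) * (b * x ^ p))) * ∫ t in Ioi x, Real.exp (-(δ / 2 * b) * t ^ p) :=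
      integral_const_mul _ _
    have step3 : (∫ t in Ioi x, Real.exp (-(δ / 2 * b) * t ^ p)) ≤ C := by
      refine setIntegral_mono_set (auxIntOn hp hδb) ?_ ?_
      · filter_upwards with t using Real.exp_nonneg _
      · exact HasSubset.Subset.eventuallyLE (Ioi_subset_Ioi hx0.le)
    calc (∫ t in Ioi x, Real.exp (-b * t ^ p))
        ≤ Real.exp (-((1 - δ / 2) * (b * x ^ p))) * C :=
          (step1.trans_eq step2).trans (mul_le_mul_of_nonneg_left step3 (Real.exp_nonneg _))
      _ ≤ Real.exp (-((1 - δ / 2) * (b * x ^ p))) * Real.exp (δ / 2 * (b * x ^ p)) :=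
          mul_le_mul_of_nonneg_left hxC (Real.exp_nonneg _)
      _ = Real.exp (-((1 - δ) * (b * x ^ p))) := by rw [← Real.exp_add]; ring_nf
  have hL : ∀ᶠ x : ℝ in atTop,
      Real.exp (-((1 + δ) * (b * x ^ p))) ≤ ∫ t in Ioi x, Real.exp (-b * t ^ p) := by
    filter_upwards [eventually_ge_atTop (0 : ℝ), auxPowSucc hp hδ0] with x hx0 hxp
    refine le_trans (Real.exp_le_exp.mpr ?_) (auxLower hp hb hx0)
    nlinarith
  filter_upwards [hU, hL, hstop.eventually_gt_atTop 0] with x hUx hLx hs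
  have hIpos : 0 < ∫ t in Ioi x, Real.exp (-b * t ^ p) :=
    lt_of_lt_of_le (Real.exp_pos _) hLx
  have hlogU : Real.log (∫ t in Ioi x, Real.exp (-b * t ^ p)) ≤ -((1 - δ) * (b * x ^ p)) :=
    (Real.log_le_iff_le_exp hIpos).mpr hUx
  have hlogL : -((1 + δ) * (b * x ^ p)) ≤ Real.log (∫ t in Ioi x, Real.exp (-b * t ^ p)) :=
    (Real.le_log_iff_exp_le hIpos).mpr hLx
  rw [Real.dist_eq]
  have habs : |(-Real.log (∫ t in Ioi x, Real.exp (-b * t ^ p))) / (b * x ^ p) - 1| ≤ δ := by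
    rw [div_sub_one hs.ne', abs_div, abs_of_pos hs, div_le_iff₀ hs, abs_le]
    constructor <;> nlinarith
  exact lt_of_le_of_lt habs hδε

lemma tailPos {p b : ℝ} (hp : 0 < p) (hb : 0 < b) {x : ℝ} (hx : 0 ≤ x) :
    0 < ∫ t in Ioi x, Real.exp (-b * t ^ p) :=
  lt_of_lt_of_le (Real.exp_pos _) (auxLower hp hb hx)

lemma tailNegLogTop {p b : ℝ} (hp : 0 < p) (hb : 0 < b) :
    Tendsto (fun x : ℝ => -Real.log (∫ t in Ioi x, Real.exp (-b * t ^ p))) atTop atTop := by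
  have h := (tailTendsto hp hb).pos_mul_atTop one_pos (auxScaleTop hp hb)
  refine h.congr' ?_
  filter_upwards [(auxScaleTop hp hb).eventually_gt_atTop 0] with x hs
  exact div_mul_cancel₀ _ hs.ne'

lemma tailZero {p b : ℝ} (hp : 0 < p) (hb : 0 < b) :
    Tendsto (fun x : ℝ => ∫ t in Ioi x, Real.exp (-b * t ^ p)) atTop (nhds 0) := by
  have h1 : Tendsto (fun x : ℝ => Real.log (∫ t in Ioi x, Real.exp (-b * t ^ p))) atTop atBot := by
    have := tendsto_neg_atTop_atBot.comp (tailNegLogTop hp hb)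
    simpa [Function.comp_def] using this
  have h2 := Real.tendsto_exp_atBot.comp h1
  refine h2.congr' ?_
  filter_upwards [eventually_ge_atTop (0:ℝ)] with x hx
  have := Real.exp_log (tailPos hp hb hx)
  simpa using this

lemma tailTendsto' {p b c : ℝ} (hp : 0 < p) (hb : 0 < b) (hc : 0 < c) :
    Tendsto (fun x : ℝ => -Real.log (c * ∫ t in Ioi x, Real.exp (-b * t ^ p)) / (b * x ^ p))
      atTop (nhds 1) := by
  have h1 : Tendsto (fun x : ℝ => -Real.log c / (b * x ^ p)) atTop (nhds 0) :=
    Tendsto.div_atTop tendsto_const_nhds (auxScaleTop hp hb)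
  have h2 := h1.add (tailTendsto hp hb)
  rw [zero_add] at h2
  refine h2.congr' ?_
  filter_upwards [eventually_ge_atTop (0:ℝ)] with x hx
  rw [← add_div, ← neg_add, ← Real.log_mul hc.ne' (tailPos hp hb hx).ne']

end Aux

section Dist

variable {p lam : ℝ}

lemma absCongr (b : ℝ) {x : ℝ} (hx : 0 ≤ x) :
    (∫ t in Ioi x, Real.exp (-b * |t| ^ p)) = ∫ t in Ioi x, Real.exp (-b * t ^ p) :=
  setIntegral_congr_fun measurableSet_Ioi fun t ht => by
    rw [abs_of_pos (lt_of_le_of_lt hx ht)]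

lemma expPowerZ_pos (hp : 0 < p) (hlam : 0 < lam) : 0 < expPowerZ p lam := by
  have h : expPowerZ p lam = 2 * ∫ t in Ioi (0:ℝ), Real.exp (-lam * t ^ p) :=
    integral_comp_abs (f := fun t => Real.exp (-lam * t ^ p))
  rw [h]
  have := tailPos hp hlam (le_refl (0:ℝ))
  linarith

lemma oneSubExpPowerCDF (hp : 0 < p) (hlam : 0 < lam) (x : ℝ) :
    1 - expPowerCDF p lam x
      = (expPowerZ p lam)⁻¹ * ∫ t in Ioi x, Real.exp (-lam * |t| ^ p) := by
  have hint := auxIntAbs hp hlam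
  have hsplit := intervalIntegral.integral_Iic_add_Ioi (b := x) hint.integrableOn hint.integrableOn
  have hZ : (expPowerZ p lam) = (∫ t in Iic x, Real.exp (-lam * |t| ^ p))
      + ∫ t in Ioi x, Real.exp (-lam * |t| ^ p) := hsplit.symm
  have hF : expPowerCDF p lam x
      = (expPowerZ p lam)⁻¹ * ∫ t in Iic x, Real.exp (-lam * |t| ^ p) := by
    unfold expPowerCDF
    exact integral_const_mul _ _
  have hZpos := expPowerZ_pos hp hlam
  rw [hF]
  calc 1 - (expPowerZ p lam)⁻¹ * ∫ t in Iic x, Real.exp (-lam * |t| ^ p)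
      = (expPowerZ p lam)⁻¹ * expPowerZ p lam
        - (expPowerZ p lam)⁻¹ * ∫ t in Iic x, Real.exp (-lam * |t| ^ p) := by
        rw [inv_mul_cancel₀ hZpos.ne']
    _ = (expPowerZ p lam)⁻¹ * ∫ t in Ioi x, Real.exp (-lam * |t| ^ p) := by
        rw [hZ]; ring

lemma gaussTotal : ∫ x : ℝ, Real.exp (-x ^ 2 / 2) = Real.sqrt (2 * π) := by
  have h := integral_gaussian (1/2)
  have h2 : π / (1/2 : ℝ) = 2 * π := by ring
  rw [h2] at h
  rw [← h]
  congr 1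
  funext x
  ring_nf

lemma gaussInt : Integrable (fun x : ℝ => Real.exp (-x ^ 2 / 2)) := by
  have h := integrable_exp_neg_mul_sq (by norm_num : (0:ℝ) < 1/2)
  have he : (fun x : ℝ => Real.exp (-(1/2 : ℝ) * x ^ 2)) = fun x => Real.exp (-x ^ 2 / 2) := by
    funext x; ring_nf
  rwa [he] at h

lemma sqrtTwoPi_pos : 0 < Real.sqrt (2 * π) :=
  Real.sqrt_pos.mpr (by positivity)

lemma oneSubStdNormalCDF (z : ℝ) :
    1 - stdNormalCDF z
      = (Real.sqrt (2 * π))⁻¹ * ∫ t in Ioi z, Real.exp (-t ^ 2 / 2) := by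
  have hint := gaussInt
  have hsplit := intervalIntegral.integral_Iic_add_Ioi (b := z) hint.integrableOn hint.integrableOn
  rw [gaussTotal] at hsplit
  have hG : stdNormalCDF z
      = (Real.sqrt (2 * π))⁻¹ * ∫ t in Iic z, Real.exp (-t ^ 2 / 2) := by
    unfold stdNormalCDF
    simp_rw [one_div]
    exact integral_const_mul _ _
  rw [hG]
  calc 1 - (Real.sqrt (2 * π))⁻¹ * ∫ t in Iic z, Real.exp (-t ^ 2 / 2)
      = (Real.sqrt (2 * π))⁻¹ * Real.sqrt (2 * π)
        - (Real.sqrt (2 * π))⁻¹ * ∫ t in Iic z, Real.exp (-t ^ 2 / 2) := by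
        rw [inv_mul_cancel₀ sqrtTwoPi_pos.ne']
    _ = (Real.sqrt (2 * π))⁻¹ * ∫ t in Ioi z, Real.exp (-t ^ 2 / 2) := by
        rw [← hsplit]; ring

lemma sqCongr : (fun t : ℝ => Real.exp (-(1/2 : ℝ) * t ^ (2:ℝ))) = fun t : ℝ => Real.exp (-t ^ 2 / 2) := by
  funext t
  rw [Real.rpow_two]
  ring_nf

end Dist

theorem exp_power_transport_asymptotics (p lam : ℝ) (hp : 0 < p) (hlam : 0 < lam)
    (T : ℝ → ℝ) (hT : ∀ z, expPowerCDF p lam (T z) = stdNormalCDF z) :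
    Tendsto (fun z => T z / (z ^ 2 / (2 * lam)) ^ (1 / p)) atTop (nhds 1) := by
  have hZpos := expPowerZ_pos hp hlam
  -- tail asymptotics for the exponential power CDF
  have hExpTail : Tendsto (fun x : ℝ => -Real.log (1 - expPowerCDF p lam x) / (lam * x ^ p))
      atTop (nhds 1) := by
    refine (tailTendsto' hp hlam (inv_pos.mpr hZpos)).congr' ?_
    filter_upwards [eventually_ge_atTop (0:ℝ)] with x hx
    rw [oneSubExpPowerCDF hp hlam x, absCongr lam hx]
  -- tail asymptotics for the standard normal CDF
  have hGTail : Tendsto (fun z : ℝ => -Real.log (1 - stdNormalCDF z) / ((1/2 : ℝ) * z ^ (2:ℝ)))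
      atTop (nhds 1) := by
    refine (tailTendsto' (p := (2:ℝ)) (b := (1/2:ℝ)) (c := (Real.sqrt (2*π))⁻¹) two_pos
      (by norm_num) (inv_pos.mpr sqrtTwoPi_pos)).congr' ?_
    filter_upwards with z
    rw [oneSubStdNormalCDF z, sqCongr]
  -- T tends to infinity
  have hFmono : Monotone (expPowerCDF p lam) := by
    intro x y hxy
    refine setIntegral_mono_set (((auxIntAbs hp hlam).const_mul _).integrableOn) ?_ ?_
    · filter_upwards with t
      exact mul_nonneg (inv_pos.mpr hZpos).le (Real.exp_nonneg _)
    · exact HasSubset.Subset.eventuallyLE (Iic_subset_Iic.mpr hxy)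
  have hFlt1 : ∀ M, expPowerCDF p lam M < 1 := by
    intro M
    have h1 : 0 < ∫ t in Ioi M, Real.exp (-lam * |t| ^ p) := by
      refine lt_of_lt_of_le ?_ (setIntegral_mono_set (auxIntAbs hp hlam).integrableOn
        (by filter_upwards with t using Real.exp_nonneg _)
        (HasSubset.Subset.eventuallyLE (Ioi_subset_Ioi (le_max_left M 0))))
      rw [absCongr lam (le_max_right M 0)]
      exact tailPos hp hlam (le_max_right M 0)
    have := oneSubExpPowerCDF hp hlam M
    nlinarith [inv_pos.mpr hZpos]
  have hGto1 : Tendsto stdNormalCDF atTop (nhds 1) := by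
    have hJ : Tendsto (fun z : ℝ => ∫ t in Ioi z, Real.exp (-t ^ 2 / 2)) atTop (nhds 0) := by
      have := tailZero (p := (2:ℝ)) (b := (1/2:ℝ)) two_pos (by norm_num)
      refine this.congr fun z => ?_
      rw [sqCongr]
    have h2 : Tendsto (fun z => 1 - (Real.sqrt (2*π))⁻¹ * ∫ t in Ioi z, Real.exp (-t ^ 2 / 2))
        atTop (nhds 1) := by
      have := (tendsto_const_nhds (x := (1:ℝ)) (f := atTop (α := ℝ))).sub
        ((tendsto_const_nhds (x := (Real.sqrt (2*π))⁻¹) (f := atTop (α := ℝ))).mul hJ)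
      simpa using this
    refine h2.congr fun z => ?_
    have := oneSubStdNormalCDF z
    linarith
  have hTtop : Tendsto T atTop atTop := by
    rw [tendsto_atTop]
    intro M
    filter_upwards [hGto1.eventually_const_lt (hFlt1 M)] with z hz
    by_contra h
    push_neg at h
    have := hFmono h.le
    rw [hT z] at this
    exact absurd (lt_of_lt_of_le hz this) (lt_irrefl _)
  -- combine
  have hAtop : Tendsto (fun x : ℝ => -Real.log (1 - expPowerCDF p lam x)) atTop atTop := by
    have h := hExpTail.pos_mul_atTop one_pos (auxScaleTop hp hlam)
    refine h.congr' ?_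
    filter_upwards [(auxScaleTop hp hlam).eventually_gt_atTop 0] with x hs
    exact div_mul_cancel₀ _ hs.ne'
  have hBtop : Tendsto (fun z : ℝ => -Real.log (1 - stdNormalCDF z)) atTop atTop := by
    have h := hGTail.pos_mul_atTop one_pos (auxScaleTop (p := (2:ℝ)) (b := (1/2:ℝ)) two_pos (by norm_num))
    refine h.congr' ?_
    filter_upwards [(auxScaleTop (p := (2:ℝ)) (b := (1/2:ℝ)) two_pos
      (by norm_num)).eventually_gt_atTop 0] with z hs
    exact div_mul_cancel₀ _ hs.ne'
  have hQ : Tendsto (fun x : ℝ => (lam * x ^ p) / (-Real.log (1 - expPowerCDF p lam x)))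
      atTop (nhds 1) := by
    have := hExpTail.inv₀ one_ne_zero
    simpa [inv_div] using this
  have hQT := hQ.comp hTtop
  have h1 : Tendsto (fun z : ℝ => (lam * (T z) ^ p) / ((1/2 : ℝ) * z ^ (2:ℝ)))
      atTop (nhds 1) := by
    have hmul := hQT.mul hGTail
    rw [one_mul] at hmul
    refine hmul.congr' ?_
    filter_upwards [hBtop.eventually_gt_atTop 0] with z hBz
    have hw : -Real.log (1 - expPowerCDF p lam (T z)) = -Real.log (1 - stdNormalCDF z) := by
      rw [hT z]
    simp only [Function.comp]
    rw [hw, div_mul_div_comm, mul_comm (lam * T z ^ p) (-Real.log (1 - stdNormalCDF z)),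
      mul_div_mul_left _ _ hBz.ne']
  have h2 : Tendsto (fun z : ℝ => (T z) ^ p / (z ^ 2 / (2 * lam))) atTop (nhds 1) := by
    refine h1.congr fun z => ?_
    rw [Real.rpow_two]
    field_simp
  have h3 : Tendsto (fun z : ℝ => ((T z) ^ p / (z ^ 2 / (2 * lam))) ^ (1/p : ℝ))
      atTop (nhds 1) := by
    have hc := (Real.continuousAt_rpow_const 1 (1/p) (Or.inl one_ne_zero)).tendsto.comp h2
    simpa [Function.comp_def] using hc
  refine h3.congr' ?_
  filter_upwards [hTtop.eventually_gt_atTop 0, eventually_gt_atTop (0:ℝ)] with z hTz hz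
  have hD : (0:ℝ) < z ^ 2 / (2 * lam) := by positivity
  have hTp : ((T z) ^ p) ^ ((1:ℝ)/p) = T z := by
    rw [one_div, ← Real.rpow_mul hTz.le, mul_inv_cancel₀ hp.ne', Real.rpow_one]
  rw [Real.div_rpow (Real.rpow_nonneg hTz.le p) hD.le, hTp]
end

section
/- Let T(z) = γ·tan(π·Φ⁰(z) - π/2) be the transport map pushing the standard normal to the Cauchy distribution with scale γ. Then T(z) ~ γ z e^{z²/2}/√(π/2) as z → ∞. -/
open Real MeasureTheory Filter

noncomputable def gaussTail (z : ℝ) : ℝ := ∫ t in Set.Ioi z, Real.exp (-t ^ 2 / 2)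

lemma gauss_integrable : MeasureTheory.Integrable (fun t : ℝ => Real.exp (-t ^ 2 / 2)) := by
  have h := integrable_exp_neg_mul_sq (b := (1:ℝ)/2) (by norm_num)
  convert h using 2 with t
  ring_nf

lemma gauss_tendsto_zero : Tendsto (fun t : ℝ => Real.exp (-t ^ 2 / 2)) atTop (nhds 0) := by
  apply Real.tendsto_exp_atBot.comp
  have h1 : Tendsto (fun t : ℝ => t ^ 2 / 2) atTop atTop :=
    (tendsto_pow_atTop (by norm_num)).atTop_div_const (by norm_num)
  have h2 : Tendsto (fun t : ℝ => -(t ^ 2 / 2)) atTop atBot := tendsto_neg_atBot_iff.mpr h1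
  exact h2.congr (fun t => by ring)

lemma gauss_anti_hasDerivAt (t : ℝ) :
    HasDerivAt (fun t : ℝ => -Real.exp (-t ^ 2 / 2)) (t * Real.exp (-t ^ 2 / 2)) t := by
  have h1 : HasDerivAt (fun t : ℝ => -t ^ 2 / 2) (-t) t := by
    have := ((hasDerivAt_pow 2 t).neg).div_const 2
    simpa using this.congr_deriv (by ring)
  have : HasDerivAt (fun t : ℝ => -Real.exp (-t ^ 2 / 2)) (-(Real.exp (-t ^ 2 / 2) * -t)) t :=
    (h1.exp).neg
  convert this using 1
  ring

lemma integral_mul_gauss (z : ℝ) :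
    ∫ t in Set.Ioi z, t * Real.exp (-t ^ 2 / 2) = Real.exp (-z ^ 2 / 2) := by
  have hint : MeasureTheory.IntegrableOn (fun t : ℝ => t * Real.exp (-t ^ 2 / 2))
      (Set.Ioi z) := by
    have h := integrable_mul_exp_neg_mul_sq (b := (1:ℝ)/2) (by norm_num)
    have h' : MeasureTheory.Integrable (fun t : ℝ => t * Real.exp (-t ^ 2 / 2)) := by
      convert h using 2 with t
      ring_nf
    exact h'.integrableOn
  have := integral_Ioi_of_hasDerivAt_of_tendsto' (a := z)
    (fun x _ => gauss_anti_hasDerivAt x) hint (gauss_tendsto_zero.neg.congr' ?_)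
  · simpa using this
  · filter_upwards with x; simp

lemma gaussTail_upper {z : ℝ} (hz : 0 < z) :
    z * gaussTail z ≤ Real.exp (-z ^ 2 / 2) := by
  rw [← integral_mul_gauss z, gaussTail, ← integral_const_mul]
  apply setIntegral_mono_on
  · exact (gauss_integrable.integrableOn).const_mul z
  · have h := integrable_mul_exp_neg_mul_sq (b := (1:ℝ)/2) (by norm_num)
    have h' : MeasureTheory.Integrable (fun t : ℝ => t * Real.exp (-t ^ 2 / 2)) := by
      convert h using 2 with t; ring_nf
    exact h'.integrableOn
  · exact measurableSet_Ioi
  · intro t ht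
    exact mul_le_mul_of_nonneg_right (le_of_lt ht) (Real.exp_pos _).le

lemma inv_anti_hasDerivAt {t : ℝ} (ht : 0 < t) :
    HasDerivAt (fun t : ℝ => -Real.exp (-t ^ 2 / 2) * t⁻¹)
      ((1 + t⁻¹ ^ 2) * Real.exp (-t ^ 2 / 2)) t := by
  have h1 : HasDerivAt (fun t : ℝ => -Real.exp (-t ^ 2 / 2) * t⁻¹)
      (t * Real.exp (-t ^ 2 / 2) * t⁻¹ + -Real.exp (-t ^ 2 / 2) * -(t ^ 2)⁻¹) t :=
    (gauss_anti_hasDerivAt t).mul (hasDerivAt_inv ht.ne')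
  convert h1 using 1
  field_simp

lemma integrableOn_aux {z : ℝ} (hz : 0 < z) :
    MeasureTheory.IntegrableOn (fun t : ℝ => (1 + t⁻¹ ^ 2) * Real.exp (-t ^ 2 / 2))
      (Set.Ioi z) := by
  apply MeasureTheory.Integrable.mono'
      ((gauss_integrable.integrableOn).const_mul (1 + z⁻¹ ^ 2))
  · apply ContinuousOn.aestronglyMeasurable _ measurableSet_Ioi
    apply ContinuousOn.mul
    · apply ContinuousOn.add continuousOn_const
      exact ((continuousOn_inv₀.mono (fun t ht => ne_of_gt (hz.trans ht))).pow 2)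
    · exact (Real.continuous_exp.comp (by continuity)).continuousOn
  · rw [ae_restrict_iff' measurableSet_Ioi]
    filter_upwards with t ht
    have htpos : 0 < t := hz.trans ht
    have h1 : (0:ℝ) < 1 + t⁻¹ ^ 2 := by positivity
    rw [Real.norm_eq_abs, abs_of_pos (by positivity)]
    apply mul_le_mul_of_nonneg_right _ (Real.exp_pos _).le
    have : t⁻¹ ≤ z⁻¹ := inv_anti₀ hz (le_of_lt ht)
    have ht0 : 0 ≤ t⁻¹ := by positivity
    nlinarith

lemma integral_aux {z : ℝ} (hz : 0 < z) :
    ∫ t in Set.Ioi z, (1 + t⁻¹ ^ 2) * Real.exp (-t ^ 2 / 2) = Real.exp (-z ^ 2 / 2) / z := by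
  have := integral_Ioi_of_hasDerivAt_of_tendsto' (a := z) (m := 0)
    (f := fun t : ℝ => -Real.exp (-t ^ 2 / 2) * t⁻¹)
    (fun x hx => inv_anti_hasDerivAt (hz.trans_le hx)) (integrableOn_aux hz) ?_
  · rw [this]; field_simp; ring
  · have h2 : Tendsto (fun t : ℝ => t⁻¹) atTop (nhds 0) := tendsto_inv_atTop_zero
    have := (gauss_tendsto_zero.neg).mul h2
    simpa using this

lemma gaussTail_lower {z : ℝ} (hz : 0 < z) :
    Real.exp (-z ^ 2 / 2) / z ≤ (1 + z⁻¹ ^ 2) * gaussTail z := by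
  rw [← integral_aux hz, gaussTail, ← integral_const_mul]
  apply setIntegral_mono_on
  · exact integrableOn_aux hz
  · exact (gauss_integrable.integrableOn).const_mul _
  · exact measurableSet_Ioi
  · intro t ht
    apply mul_le_mul_of_nonneg_right _ (Real.exp_pos _).le
    have htpos : 0 < t := hz.trans ht
    have : t⁻¹ ≤ z⁻¹ := inv_anti₀ hz (le_of_lt ht)
    have ht0 : 0 ≤ t⁻¹ := by positivity
    gcongr <;> nlinarith

lemma mills : Tendsto (fun z : ℝ => z * Real.exp (z ^ 2 / 2) * gaussTail z) atTop (nhds 1) := by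
  apply tendsto_of_tendsto_of_tendsto_of_le_of_le'
    (g := fun z : ℝ => (1 + z⁻¹ ^ 2)⁻¹) (h := fun _ : ℝ => (1:ℝ))
  · have h1 : Tendsto (fun z : ℝ => 1 + z⁻¹ ^ 2) atTop (nhds 1) := by
      have := (tendsto_inv_atTop_zero (𝕜 := ℝ)).pow 2
      simpa using tendsto_const_nhds.add this
    simpa using h1.inv₀ (by norm_num)
  · exact tendsto_const_nhds
  · filter_upwards [eventually_gt_atTop (0:ℝ)] with z hz
    have h1 := gaussTail_lower hz
    have h2 : (0:ℝ) < 1 + z⁻¹ ^ 2 := by positivity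
    have he : (0:ℝ) < Real.exp (z ^ 2 / 2) := Real.exp_pos _
    have hee : Real.exp (z ^ 2 / 2) * Real.exp (-z ^ 2 / 2) = 1 := by
      rw [← Real.exp_add, show z ^ 2 / 2 + -z ^ 2 / 2 = 0 by ring, Real.exp_zero]
    rw [div_le_iff₀ hz] at h1
    have h3 : (1:ℝ) ≤ (z * Real.exp (z ^ 2 / 2) * gaussTail z) * (1 + z⁻¹ ^ 2) := by
      calc (1:ℝ) = Real.exp (z ^ 2 / 2) * Real.exp (-z ^ 2 / 2) := hee.symm
        _ ≤ Real.exp (z ^ 2 / 2) * ((1 + z⁻¹ ^ 2) * gaussTail z * z) :=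
            mul_le_mul_of_nonneg_left h1 he.le
        _ = (z * Real.exp (z ^ 2 / 2) * gaussTail z) * (1 + z⁻¹ ^ 2) := by ring
    have h4 : (1 + z⁻¹ ^ 2)⁻¹ * (1 + z⁻¹ ^ 2) = 1 := inv_mul_cancel₀ h2.ne'
    nlinarith [h3, h4, h2]
  · filter_upwards [eventually_gt_atTop (0:ℝ)] with z hz
    have h1 := gaussTail_upper hz
    have he : (0:ℝ) < Real.exp (z ^ 2 / 2) := Real.exp_pos _
    have hee : Real.exp (z ^ 2 / 2) * Real.exp (-z ^ 2 / 2) = 1 := by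
      rw [← Real.exp_add, show z ^ 2 / 2 + -z ^ 2 / 2 = 0 by ring, Real.exp_zero]
    calc z * Real.exp (z ^ 2 / 2) * gaussTail z
        = (z * gaussTail z) * Real.exp (z ^ 2 / 2) := by ring
      _ ≤ Real.exp (-z ^ 2 / 2) * Real.exp (z ^ 2 / 2) :=
          mul_le_mul_of_nonneg_right h1 he.le
      _ = 1 := by rw [mul_comm]; exact hee

theorem cauchy_transport_asymptotics (γ : ℝ) (hγ : 0 < γ)
    (T : ℝ → ℝ) (hT : ∀ z, T z = γ * Real.tan (Real.pi * stdNormalCDF z - Real.pi / 2)) :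
    Tendsto (fun z => T z / (γ * z * Real.exp (z ^ 2 / 2) / Real.sqrt (Real.pi / 2)))
      atTop (nhds 1) := by
  have pi_pos := Real.pi_pos
  set c : ℝ := Real.sqrt (2 * Real.pi) with hc_def
  have hc : 0 < c := Real.sqrt_pos.2 (by positivity)
  -- total integral
  have htot : (∫ x : ℝ, Real.exp (-x ^ 2 / 2)) = c := by
    rw [show (fun x : ℝ => Real.exp (-x ^ 2 / 2)) = fun x : ℝ => Real.exp (-(1/2) * x ^ 2)
      from funext fun x => by ring_nf, integral_gaussian, hc_def,
      show Real.pi / (1/2 : ℝ) = 2 * Real.pi by ring]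
  have hΦ : ∀ z : ℝ, stdNormalCDF z = 1 - gaussTail z / c := by
    intro z
    have hsplit := intervalIntegral.integral_Iic_add_Ioi (b := z) (μ := volume)
      gauss_integrable.integrableOn gauss_integrable.integrableOn
    rw [htot] at hsplit
    have : stdNormalCDF z = (1 / c) * ∫ t in Set.Iic z, Real.exp (-t ^ 2 / 2) := by
      rw [stdNormalCDF, ← integral_const_mul]
    rw [this]
    have hIic : (∫ t in Set.Iic z, Real.exp (-t ^ 2 / 2)) = c - gaussTail z := by
      rw [gaussTail] at *; linarith
    rw [hIic]
    field_simp
  set u : ℝ → ℝ := fun z => Real.pi * gaussTail z / c with hu_def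
  -- gaussTail tends to 0
  have hze : Tendsto (fun z : ℝ => z * Real.exp (z ^ 2 / 2)) atTop atTop := by
    apply tendsto_atTop_mono' _ _ tendsto_id
    filter_upwards [eventually_ge_atTop (0:ℝ)] with z hz
    have : (1:ℝ) ≤ Real.exp (z ^ 2 / 2) := Real.one_le_exp (by positivity)
    calc (z:ℝ) = z * 1 := (mul_one z).symm
      _ ≤ z * Real.exp (z ^ 2 / 2) := mul_le_mul_of_nonneg_left this hz
  have hG0 : Tendsto gaussTail atTop (nhds 0) := by
    have h := mills.div_atTop hze
    apply h.congr'
    filter_upwards [eventually_gt_atTop (0:ℝ)] with z hz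
    have hne : z * Real.exp (z ^ 2 / 2) ≠ 0 := by positivity
    field_simp
  have hu0 : Tendsto u atTop (nhds 0) := by
    have := (hG0.const_mul Real.pi).div_const c
    simpa [hu_def] using this
  have hGpos : ∀ z : ℝ, 0 < z → 0 < gaussTail z := by
    intro z hz
    have h1 := gaussTail_lower hz
    have h2 : (0:ℝ) < Real.exp (-z ^ 2 / 2) / z := by positivity
    nlinarith [sq_nonneg z⁻¹]
  have hupos : ∀ᶠ z : ℝ in atTop, 0 < u z := by
    filter_upwards [eventually_gt_atTop (0:ℝ)] with z hz
    have := hGpos z hz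
    simp only [hu_def]
    positivity
  have husmall : ∀ᶠ z : ℝ in atTop, u z < Real.pi / 2 :=
    hu0.eventually (eventually_lt_nhds (by positivity))
  -- tan(u z)/u z → 1
  have htanu : Tendsto (fun z => Real.tan (u z) / u z) atTop (nhds 1) := by
    have hd : HasDerivAt Real.tan 1 0 := by
      have := Real.hasDerivAt_tan (x := 0) (by norm_num [Real.cos_zero])
      simpa [Real.cos_zero] using this
    have hslope := hasDerivAt_iff_tendsto_slope.1 hd
    have hu' : Tendsto u atTop (nhdsWithin (0:ℝ) {x | x ≠ 0}) := by
      rw [tendsto_nhdsWithin_iff]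
      exact ⟨hu0, by filter_upwards [hupos] with z hz; exact ne_of_gt hz⟩
    have := hslope.comp hu'
    apply this.congr
    intro z
    rw [Function.comp_apply, slope_def_field]
    simp [Real.tan_zero]
  -- u z * (z * exp(z²/2)) → √(π/2)
  have hpic : Real.pi / c = Real.sqrt (Real.pi / 2) := by
    rw [div_eq_iff hc.ne', hc_def, ← Real.sqrt_mul (by positivity),
      show Real.pi / 2 * (2 * Real.pi) = Real.pi ^ 2 by ring, Real.sqrt_sq pi_pos.le]
  have hB : Tendsto (fun z => u z * (z * Real.exp (z ^ 2 / 2))) atTop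
      (nhds (Real.sqrt (Real.pi / 2))) := by
    have hB0 : Tendsto (fun z => u z * (z * Real.exp (z ^ 2 / 2))) atTop
        (nhds (Real.pi / c * 1)) := by
      apply (mills.const_mul (Real.pi / c)).congr
      intro z
      simp only [hu_def]
      field_simp
    rwa [mul_one, hpic] at hB0
  have hA : Tendsto (fun z => Real.tan (u z) * (z * Real.exp (z ^ 2 / 2))) atTop
      (nhds (Real.sqrt (Real.pi / 2))) := by
    have := htanu.mul hB
    rw [one_mul] at this
    apply this.congr'
    filter_upwards [hupos] with z hz
    field_simp
  have hsq : (0:ℝ) < Real.sqrt (Real.pi / 2) := Real.sqrt_pos.2 (by positivity)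
  have hfin := (tendsto_const_nhds (x := Real.sqrt (Real.pi / 2)) (f := atTop)).div hA hsq.ne'
  rw [div_self hsq.ne'] at hfin
  apply hfin.congr'
  filter_upwards [hupos, husmall, eventually_gt_atTop (0:ℝ)] with z hu1 hu2 hz
  have htanpos : 0 < Real.tan (u z) := Real.tan_pos_of_pos_of_lt_pi_div_two hu1 hu2
  have hTz : T z = γ * (Real.tan (u z))⁻¹ := by
    rw [hT z, hΦ z, show Real.pi * (1 - gaussTail z / c) - Real.pi / 2
      = Real.pi / 2 - u z by simp only [hu_def]; ring, Real.tan_pi_div_two_sub]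
  rw [hTz, Pi.div_apply]
  have hexp : (0:ℝ) < Real.exp (z ^ 2 / 2) := Real.exp_pos _
  field_simp
end

section
/- Suppose ‖∇T(z)‖ ≤ C·exp(‖z‖²/(2α)) for some α > 2 and C > 0, and that the likelihood is the linear-Gaussian one f(x;y) = C·exp(-‖Ax-y‖²/(2σ²)). Then trace(H) = Z^{-1} ∫ ‖∇_z T(z) ∇_x log f(T(z);y)‖² f(T(z);y) φ⁰(z) dz is finite. -/
open Real MeasureTheory

set_option maxHeartbeats 1000000 in
theorem traceH_finite_linear_gaussian (d k : ℕ)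
    (A : EuclideanSpace ℝ (Fin d) →L[ℝ] EuclideanSpace ℝ (Fin k))
    (y : EuclideanSpace ℝ (Fin k)) (σ C α : ℝ) (hσ : 0 < σ) (hC : 0 < C) (hα : 2 < α)
    (T : EuclideanSpace ℝ (Fin d) → EuclideanSpace ℝ (Fin d))
    (DT : EuclideanSpace ℝ (Fin d) → (EuclideanSpace ℝ (Fin d) →L[ℝ] EuclideanSpace ℝ (Fin d)))
    (hT_diff : ∀ z, HasFDerivAt T (DT z) z) (hT_cont : Continuous T) (hDT_cont : Continuous DT)
    (hDT_bound : ∀ z, ‖DT z‖ ≤ C * Real.exp (‖z‖ ^ 2 / (2 * α)))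
    -- the linear-Gaussian likelihood and its log-gradient
    (f : EuclideanSpace ℝ (Fin d) → ℝ)
    (hf : ∀ x, f x = C * Real.exp (-‖A x - y‖ ^ 2 / (2 * σ ^ 2)))
    (gradlogf : EuclideanSpace ℝ (Fin d) → EuclideanSpace ℝ (Fin d))
    (hgrad : ∀ x, gradlogf x = -(1 / σ ^ 2) • (ContinuousLinearMap.adjoint A) (A x - y)) :
    Integrable (fun z : EuclideanSpace ℝ (Fin d) =>
      ‖(DT z) (gradlogf (T z))‖ ^ 2 * f (T z) *
        ((2 * Real.pi) ^ (-(d : ℝ) / 2) * Real.exp (-‖z‖ ^ 2 / 2))) := by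
  have hα0 : (0:ℝ) < α := by linarith
  have hσ2 : (0:ℝ) < σ ^ 2 := by positivity
  set B : ℝ := ‖ContinuousLinearMap.adjoint A‖ with hB
  have hB0 : 0 ≤ B := norm_nonneg _
  set cd : ℝ := (2 * Real.pi) ^ (-(d : ℝ) / 2) with hcd
  have hcd0 : 0 < cd := by
    apply Real.rpow_pos_of_pos; positivity
  set M : ℝ := 2 * B ^ 2 * C / σ ^ 2 with hM
  have hM0 : 0 ≤ M := by positivity
  set b : ℝ := 1 / 2 - 1 / α with hb
  have hb0 : 0 < b := by
    rw [hb]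
    have : 1 / α < 1 / 2 := by
      apply one_div_lt_one_div_of_lt <;> linarith
    linarith
  -- scalar key bound
  have hkey : ∀ t : ℝ, 0 ≤ t → t * Real.exp (-t / (2 * σ ^ 2)) ≤ 2 * σ ^ 2 := by
    intro t ht
    have h1 : t / (2 * σ ^ 2) ≤ Real.exp (t / (2 * σ ^ 2)) := by
      have := Real.add_one_le_exp (t / (2 * σ ^ 2))
      linarith
    have h2 : t ≤ 2 * σ ^ 2 * Real.exp (t / (2 * σ ^ 2)) := by
      rw [div_le_iff₀ (by positivity)] at h1
      linarith [h1]
    rw [neg_div, Real.exp_neg, mul_inv_le_iff₀ (Real.exp_pos _)]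
    linarith
  -- bound on ‖gradlogf x‖ ^ 2 * f x
  have hgf : ∀ x, ‖gradlogf x‖ ^ 2 * f x ≤ M := by
    intro x
    rw [hgrad x, hf x]
    have hn : ‖(-(1 / σ ^ 2) : ℝ) • (ContinuousLinearMap.adjoint A) (A x - y)‖
        ≤ (1 / σ ^ 2) * (B * ‖A x - y‖) := by
      rw [norm_smul]
      have h1 : ‖(-(1 / σ ^ 2) : ℝ)‖ = 1 / σ ^ 2 := by
        rw [Real.norm_eq_abs, abs_neg, abs_of_nonneg (by positivity)]
      rw [h1]
      exact mul_le_mul_of_nonneg_left ((ContinuousLinearMap.adjoint A).le_opNorm _)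
        (by positivity)
    have hn2 : ‖(-(1 / σ ^ 2) : ℝ) • (ContinuousLinearMap.adjoint A) (A x - y)‖ ^ 2
        ≤ B ^ 2 * ‖A x - y‖ ^ 2 / σ ^ 4 := by
      have h2 := pow_le_pow_left₀ (norm_nonneg _) hn 2
      have h3 : (1 / σ ^ 2 * (B * ‖A x - y‖)) ^ 2 = B ^ 2 * ‖A x - y‖ ^ 2 / σ ^ 4 := by
        field_simp
      linarith [h2, h3.le, h3.ge]
    set t : ℝ := ‖A x - y‖ ^ 2 with htdef
    have ht : 0 ≤ t := by positivity
    calc ‖(-(1 / σ ^ 2) : ℝ) • (ContinuousLinearMap.adjoint A) (A x - y)‖ ^ 2 *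
          (C * Real.exp (-t / (2 * σ ^ 2)))
        ≤ (B ^ 2 * t / σ ^ 4) * (C * Real.exp (-t / (2 * σ ^ 2))) := by
          apply mul_le_mul_of_nonneg_right hn2 (by positivity)
      _ = (B ^ 2 * C / σ ^ 4) * (t * Real.exp (-t / (2 * σ ^ 2))) := by ring
      _ ≤ (B ^ 2 * C / σ ^ 4) * (2 * σ ^ 2) := by
          exact mul_le_mul_of_nonneg_left (hkey t ht) (by positivity)
      _ = M := by rw [hM]; field_simp
  -- continuity
  have hfc : Continuous f := by
    have : f = fun x => C * Real.exp (-‖A x - y‖ ^ 2 / (2 * σ ^ 2)) := funext hf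
    rw [this]
    exact continuous_const.mul (Real.continuous_exp.comp
      (((A.continuous.sub continuous_const).norm.pow 2).neg.div_const _))
  have hgc : Continuous gradlogf := by
    have : gradlogf = fun x =>
        (-(1 / σ ^ 2) : ℝ) • (ContinuousLinearMap.adjoint A) (A x - y) := funext hgrad
    rw [this]
    exact ((ContinuousLinearMap.adjoint A).continuous.comp
      ((A.continuous.sub continuous_const))).const_smul (-(1 / σ ^ 2) : ℝ)
  have hFc : Continuous (fun z : EuclideanSpace ℝ (Fin d) =>
      ‖(DT z) (gradlogf (T z))‖ ^ 2 * f (T z) *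
        (cd * Real.exp (-‖z‖ ^ 2 / 2))) := by
    apply Continuous.mul
    · exact ((hDT_cont.clm_apply (hgc.comp hT_cont)).norm.pow 2).mul (hfc.comp hT_cont)
    · exact continuous_const.mul (Real.continuous_exp.comp
        ((continuous_norm.pow 2).neg.div_const 2))
  -- dominating function
  set K : ℝ := C ^ 2 * M * cd with hK
  apply Integrable.mono' (g := fun z : EuclideanSpace ℝ (Fin d) =>
    K * Real.exp (-b * ‖z‖ ^ 2))
  · have h := (GaussianFourier.integrable_cexp_neg_mul_sq_norm_add
        (V := EuclideanSpace ℝ (Fin d)) (b := (b : ℂ)) (by simpa using hb0) 0 0).norm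
    have h2 : Integrable fun v : EuclideanSpace ℝ (Fin d) => Real.exp (-b * ‖v‖ ^ 2) := by
      convert h using 2 with v
      have he : (-(b:ℂ) * (‖v‖:ℂ) ^ 2 + 0 * ((inner ℝ (0 : EuclideanSpace ℝ (Fin d)) v : ℝ) : ℂ))
          = ((-b * ‖v‖ ^ 2 : ℝ) : ℂ) := by push_cast; ring
      rw [he, Complex.norm_exp, Complex.ofReal_re]
    exact h2.const_mul K
  · exact hFc.aestronglyMeasurable
  · filter_upwards with z
    have hf0 : 0 ≤ f (T z) := by rw [hf]; positivity
    have hF0 : 0 ≤ ‖(DT z) (gradlogf (T z))‖ ^ 2 * f (T z) *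
        (cd * Real.exp (-‖z‖ ^ 2 / 2)) := by
      apply mul_nonneg (mul_nonneg (by positivity) hf0) (by positivity)
    rw [Real.norm_eq_abs, abs_of_nonneg hF0]
    have h1 : ‖(DT z) (gradlogf (T z))‖ ^ 2 ≤ ‖DT z‖ ^ 2 * ‖gradlogf (T z)‖ ^ 2 := by
      have h := (DT z).le_opNorm (gradlogf (T z))
      calc ‖(DT z) (gradlogf (T z))‖ ^ 2 ≤ (‖DT z‖ * ‖gradlogf (T z)‖) ^ 2 :=
            pow_le_pow_left₀ (norm_nonneg _) h 2
        _ = ‖DT z‖ ^ 2 * ‖gradlogf (T z)‖ ^ 2 := by ring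
    have hDT2 : ‖DT z‖ ^ 2 ≤ C ^ 2 * Real.exp (‖z‖ ^ 2 / α) := by
      have h := hDT_bound z
      have he : Real.exp (‖z‖ ^ 2 / (2 * α)) ^ 2 = Real.exp (‖z‖ ^ 2 / α) := by
        rw [sq, ← Real.exp_add]; congr 1; field_simp; ring
      calc ‖DT z‖ ^ 2 ≤ (C * Real.exp (‖z‖ ^ 2 / (2 * α))) ^ 2 :=
            pow_le_pow_left₀ (norm_nonneg _) h 2
        _ = C ^ 2 * Real.exp (‖z‖ ^ 2 / α) := by rw [mul_pow, he]
    calc ‖(DT z) (gradlogf (T z))‖ ^ 2 * f (T z) * (cd * Real.exp (-‖z‖ ^ 2 / 2))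
        ≤ (‖DT z‖ ^ 2 * ‖gradlogf (T z)‖ ^ 2) * f (T z) * (cd * Real.exp (-‖z‖ ^ 2 / 2)) := by
          apply mul_le_mul_of_nonneg_right (mul_le_mul_of_nonneg_right h1 hf0) (by positivity)
      _ = ‖DT z‖ ^ 2 * (‖gradlogf (T z)‖ ^ 2 * f (T z)) * (cd * Real.exp (-‖z‖ ^ 2 / 2)) := by
          ring
      _ ≤ (C ^ 2 * Real.exp (‖z‖ ^ 2 / α)) * M * (cd * Real.exp (-‖z‖ ^ 2 / 2)) := by
          apply mul_le_mul_of_nonneg_right _ (by positivity)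
          apply mul_le_mul hDT2 (hgf (T z)) _ (by positivity)
          exact mul_nonneg (by positivity) hf0
      _ = K * Real.exp (-b * ‖z‖ ^ 2) := by
          have he : Real.exp (‖z‖ ^ 2 / α) * Real.exp (-‖z‖ ^ 2 / 2)
              = Real.exp (-b * ‖z‖ ^ 2) := by
            rw [← Real.exp_add]; congr 1; rw [hb]; field_simp; ring
          rw [hK, ← he]; ring
end
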